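/- arXiv:0911.4624 — 11 statements merged into one kernel-verified Lean document; each statement's English description precedes it below -/
import Mathlib

section
/- Let L be an infinite filiform Lie algebra with basis {a, e₁, e₂, ...} satisfying [a, eⱼ] = e_{j+1} and [eⱼ, e_{j+1}] = Σ_{s≥1} λ_{js} e_{2j+1+s} (finitely many λ_{js} nonzero for each j). Then for 1 ≤ k < m, the remaining brackets are determined by the Jacobi identity: [e_k, e_m] = Σ_{s≥1} Σ_{j: 0 ≤ j-k ≤ m-j-1} (-1)^{j-k} C(m-j-1, j-k) λ_{js} e_{m+k+s}. -/
lemma coeff_identity (K : Type*) [Field K] (k m j : ℕ) (hk : k ≤ j) (hkm : k < m) :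
    (if 2*j < m+1+k then ((-1:K))^(j-k) * (Nat.choose (m+1-j-1) (j-k) : K) else 0)
    = (if j ≤ m ∧ 2*j < m+k then ((-1:K))^(j-k) * (Nat.choose (m-j-1) (j-k) : K) else 0)
    - (if k+1 ≤ j ∧ 2*j < m+(k+1) then
        ((-1:K))^(j-(k+1)) * (Nat.choose (m-j-1) (j-(k+1)) : K) else 0) := by
  by_cases h1 : 2*j < m+k+1
  · by_cases h2 : j = k
    · subst h2
      rw [if_pos (by omega), if_pos (by omega), if_neg (by omega)]
      simp [Nat.sub_self]
    · have hjk : k < j := lt_of_le_of_ne hk (Ne.symm h2)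
      by_cases h3 : 2*j = m+k
      · rw [if_pos (by omega), if_neg (by omega), if_pos (by omega)]
        have e1 : m+1-j-1 = j-k := by omega
        have e2 : m-j-1 = j-(k+1) := by omega
        have e3 : j-k = (j-(k+1)) + 1 := by omega
        rw [e1, e2, e3, Nat.choose_self, Nat.choose_self, pow_succ]
        ring
      · rw [if_pos (by omega), if_pos (by omega), if_pos (by omega)]
        have e1 : m+1-j-1 = (m-j-1)+1 := by omega
        have e2 : j-k = (j-(k+1))+1 := by omega
        rw [e1, e2, Nat.choose_succ_succ]
        push_cast
        rw [pow_succ]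
        ring
  · rw [if_neg (by omega), if_neg (by omega), if_neg (by omega)]; ring

/-- In an infinite filiform Lie algebra with basis `B` (`B 0 = a`, `B j = eⱼ`),
brackets `[a, eⱼ] = e_{j+1}` and
`[eⱼ, e_{j+1}] = Σ_{s ≥ 1} λ_{js} e_{2j+1+s}`, the remaining brackets are
determined by the Jacobi identity: for `1 ≤ k < m`,
`[e_k, e_m] = Σ_{s ≥ 1} Σ_{j : 0 ≤ j - k ≤ m - j - 1} (-1)^(j-k) C(m-j-1, j-k) λ_{js} e_{m+k+s}`. -/
theorem filiform_bracket_formula (K : Type*) [Field K] [CharZero K]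
    (L : Type*) [LieRing L] [LieAlgebra K L] (B : Module.Basis ℕ K L)
    (lam : ℕ → (ℕ →₀ K)) (hlam0 : ∀ j, lam j 0 = 0)
    (ha : ∀ j, 1 ≤ j → ⁅B 0, B j⁆ = B (j + 1))
    (he : ∀ j, 1 ≤ j → ⁅B j, B (j + 1)⁆ = (lam j).sum fun s c => c • B (2 * j + 1 + s)) :
    ∀ k m, 1 ≤ k → k < m →
      ⁅B k, B m⁆ =
        ∑ j ∈ (Finset.Icc k m).filter (fun j => 2 * j < m + k),
          (lam j).sum fun s c =>
            ((-1 : K) ^ (j - k) * (Nat.choose (m - j - 1) (j - k) : K) * c) •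
              B (m + k + s) := by
  intro k m hk hkm
  induction m generalizing k with
  | zero => omega
  | succ m ih =>
    rcases eq_or_lt_of_le (Nat.lt_succ_iff.mp hkm) with h | h
    · -- base case m = k
      subst h
      rw [he k hk]
      rw [show (Finset.Icc k (k+1)).filter (fun j => 2*j < k+1+k) = {k} from by
        ext j
        simp only [Finset.mem_filter, Finset.mem_Icc, Finset.mem_singleton]
        omega]
      rw [Finset.sum_singleton]
      refine Finsupp.sum_congr fun s hs => ?_
      rw [Nat.sub_self, show k+1-k-1 = 0 from by omega, show 2*k+1+s = k+1+k+s from by omega]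
      simp
    · -- inductive step, k < m
      have jac : ⁅B k, B (m+1)⁆ = ⁅B 0, ⁅B k, B m⁆⁆ - ⁅B (k+1), B m⁆ := by
        have h1 := leibniz_lie (B 0) (B k) (B m)
        rw [ha k hk, ha m (by omega)] at h1
        rw [h1]; abel
      -- step 1
      have step1 : ⁅B 0, ⁅B k, B m⁆⁆ =
          ∑ j ∈ Finset.Icc k (m+1), (lam j).sum fun s c =>
            ((if j ≤ m ∧ 2*j < m+k then
                ((-1:K))^(j-k) * (Nat.choose (m-j-1) (j-k) : K) else 0) * c) •
              B (m+1+k+s) := by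
        rw [ih k hk h]
        rw [show (⁅B 0, ∑ j ∈ (Finset.Icc k m).filter (fun j => 2*j < m+k),
            (lam j).sum fun s c =>
              ((-1:K)^(j-k) * (Nat.choose (m-j-1) (j-k) : K) * c) • B (m+k+s)⁆ : L)
          = (LieAlgebra.ad K L (B 0)) (∑ j ∈ (Finset.Icc k m).filter (fun j => 2*j < m+k),
            (lam j).sum fun s c =>
              ((-1:K)^(j-k) * (Nat.choose (m-j-1) (j-k) : K) * c) • B (m+k+s)) from rfl]
        rw [map_sum]
        calc ∑ j ∈ (Finset.Icc k m).filter (fun j => 2*j < m+k),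
              (LieAlgebra.ad K L (B 0)) ((lam j).sum fun s c =>
                ((-1:K)^(j-k) * (Nat.choose (m-j-1) (j-k) : K) * c) • B (m+k+s))
            = ∑ j ∈ Finset.Icc k m, (lam j).sum fun s c =>
                ((if j ≤ m ∧ 2*j < m+k then
                    ((-1:K))^(j-k) * (Nat.choose (m-j-1) (j-k) : K) else 0) * c) •
                  B (m+1+k+s) := by
              rw [Finset.sum_filter]
              refine Finset.sum_congr rfl fun j hj => ?_
              simp only [Finset.mem_Icc] at hj
              by_cases hcond : 2*j < m+k
              · rw [if_pos hcond]
                simp only [Finsupp.sum]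
                rw [map_sum]
                refine Finset.sum_congr rfl fun s hs => ?_
                rw [map_smul, LieAlgebra.ad_apply, ha (m+k+s) (by omega),
                  show m+k+s+1 = m+1+k+s from by omega, if_pos ⟨hj.2, hcond⟩]
              · rw [if_neg hcond]
                symm
                rw [Finsupp.sum]
                refine Finset.sum_eq_zero fun s hs => ?_
                rw [if_neg (fun hh => hcond hh.2), zero_mul, zero_smul]
          _ = ∑ j ∈ Finset.Icc k (m+1), (lam j).sum fun s c =>
                ((if j ≤ m ∧ 2*j < m+k then
                    ((-1:K))^(j-k) * (Nat.choose (m-j-1) (j-k) : K) else 0) * c) •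
                  B (m+1+k+s) := by
              refine Finset.sum_subset (Finset.Icc_subset_Icc_right (by omega)) ?_
              intro j hj hj2
              simp only [Finset.mem_Icc] at hj hj2
              rw [Finsupp.sum]
              refine Finset.sum_eq_zero fun s hs => ?_
              rw [if_neg (by omega), zero_mul, zero_smul]
      -- step 2
      have step2 : ⁅B (k+1), B m⁆ =
          ∑ j ∈ Finset.Icc k (m+1), (lam j).sum fun s c =>
            ((if k+1 ≤ j ∧ 2*j < m+(k+1) then
                ((-1:K))^(j-(k+1)) * (Nat.choose (m-j-1) (j-(k+1)) : K) else 0) * c) •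
              B (m+1+k+s) := by
        have base : ⁅B (k+1), B m⁆ =
            ∑ j ∈ (Finset.Icc (k+1) m).filter (fun j => 2*j < m+(k+1)),
              (lam j).sum fun s c =>
                ((-1:K)^(j-(k+1)) * (Nat.choose (m-j-1) (j-(k+1)) : K) * c) • B (m+(k+1)+s) := by
          rcases Nat.lt_or_ge (k+1) m with h2 | h2
          · exact ih (k+1) (by omega) h2
          · have hm : k+1 = m := by omega
            rw [show (Finset.Icc (k+1) m).filter (fun j => 2*j < m+(k+1)) = ∅ from by
              ext j
              simp only [Finset.mem_filter, Finset.mem_Icc, Finset.notMem_empty,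
                iff_false, not_and]
              omega]
            rw [hm, lie_self, Finset.sum_empty]
        have e1 : (∑ j ∈ (Finset.Icc (k+1) m).filter (fun j => 2*j < m+(k+1)),
              (lam j).sum fun s c =>
                ((-1:K)^(j-(k+1)) * (Nat.choose (m-j-1) (j-(k+1)) : K) * c) • B (m+(k+1)+s))
            = ∑ j ∈ Finset.Icc (k+1) m, (lam j).sum fun s c =>
                ((if k+1 ≤ j ∧ 2*j < m+(k+1) then
                    ((-1:K))^(j-(k+1)) * (Nat.choose (m-j-1) (j-(k+1)) : K) else 0) * c) •
                  B (m+1+k+s) := by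
          rw [Finset.sum_filter]
          refine Finset.sum_congr rfl fun j hj => ?_
          simp only [Finset.mem_Icc] at hj
          by_cases hcond : 2*j < m+(k+1)
          · rw [if_pos hcond]
            refine Finsupp.sum_congr fun s hs => ?_
            rw [if_pos ⟨hj.1, hcond⟩, show m+(k+1)+s = m+1+k+s from by omega]
          · rw [if_neg hcond]
            symm
            rw [Finsupp.sum]
            refine Finset.sum_eq_zero fun s hs => ?_
            rw [if_neg (fun hh => hcond hh.2), zero_mul, zero_smul]
        have e2 : (∑ j ∈ Finset.Icc (k+1) m, (lam j).sum fun s c =>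
                ((if k+1 ≤ j ∧ 2*j < m+(k+1) then
                    ((-1:K))^(j-(k+1)) * (Nat.choose (m-j-1) (j-(k+1)) : K) else 0) * c) •
                  B (m+1+k+s))
            = ∑ j ∈ Finset.Icc k (m+1), (lam j).sum fun s c =>
                ((if k+1 ≤ j ∧ 2*j < m+(k+1) then
                    ((-1:K))^(j-(k+1)) * (Nat.choose (m-j-1) (j-(k+1)) : K) else 0) * c) •
                  B (m+1+k+s) := by
          refine Finset.sum_subset (by
            intro j hj
            simp only [Finset.mem_Icc] at *
            omega) ?_
          intro j hj hj2
          simp only [Finset.mem_Icc] at hj hj2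
          rw [Finsupp.sum]
          refine Finset.sum_eq_zero fun s hs => ?_
          rw [if_neg (by omega), zero_mul, zero_smul]
        rw [base, e1, e2]
      rw [jac, step1, step2, ← Finset.sum_sub_distrib, Finset.sum_filter]
      refine Finset.sum_congr rfl fun j hj => ?_
      simp only [Finset.mem_Icc] at hj
      have hco := coeff_identity K k m j hj.1 h
      simp only [Finsupp.sum, ← Finset.sum_sub_distrib]
      by_cases hcond : 2*j < m+1+k
      · rw [if_pos hcond] at hco ⊢
        refine Finset.sum_congr rfl fun s hs => ?_
        rw [← sub_smul, ← sub_mul, hco]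
      · rw [if_neg hcond] at hco ⊢
        refine Finset.sum_eq_zero fun s hs => ?_
        rw [← sub_smul, ← sub_mul, ← hco, zero_mul, zero_smul]
end

section
/- If L is a solvable infinite filiform Lie algebra, then L^k is abelian for some k ≥ 1. -/
set_option linter.unusedSectionVars false
set_option maxHeartbeats 1000000

open LieModule

section FiliformDevelopment

open Polynomial

namespace Filiform

variable {K : Type*} [Field K] [CharZero K]
variable {L : Type*} [LieRing L] [LieAlgebra K L]

variable (B : Module.Basis ℕ K L)

/-- tail span: span of `B i` for `i ≥ n`. -/
def Sn (n : ℕ) : Submodule K L := Submodule.span K (Set.range fun i => B (n + i))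

lemma B_mem_Sn {n i : ℕ} (h : n ≤ i) : B i ∈ Sn B n :=
  Submodule.subset_span ⟨i - n, by simp [Nat.add_sub_cancel' h]⟩

lemma Sn_mono {n m : ℕ} (h : n ≤ m) : Sn B m ≤ Sn B n := by
  rw [Sn, Submodule.span_le]
  rintro x ⟨i, rfl⟩
  exact B_mem_Sn B (le_trans h (Nat.le_add_right m i))

lemma repr_eq_zero_of_mem_Sn {n t : ℕ} (ht : t < n) {w : L} (hw : w ∈ Sn B n) :
    B.repr w t = 0 := by
  have hle : Sn B n ≤ LinearMap.ker ((Finsupp.lapply t).comp (B.repr : L →ₗ[K] (ℕ →₀ K))) := by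
    rw [Sn, Submodule.span_le]
    rintro x ⟨i, rfl⟩
    have hne : n + i ≠ t := by omega
    simp [LinearMap.mem_ker, Module.Basis.repr_self, Finsupp.single_apply, hne]
  simpa using hle hw

lemma mem_I_of_repr_zero {w : L} (h : B.repr w 0 = 0) : w ∈ Sn B 1 := by
  have hw : w = (B.repr w).sum fun i a => a • B i := by
    conv_lhs => rw [← B.linearCombination_repr w]
    rw [Finsupp.linearCombination_apply]
  rw [hw]
  apply Submodule.sum_mem
  intro i hi
  have hi1 : 1 ≤ i := by
    rcases Nat.eq_zero_or_pos i with rfl | h1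
    · exact absurd h (Finsupp.mem_support_iff.mp hi)
    · exact h1
  exact Submodule.smul_mem _ _ (B_mem_Sn B hi1)

variable {B}

lemma lie_B0_mem (ha : ∀ j, 1 ≤ j → ⁅B 0, B j⁆ = B (j + 1)) {n : ℕ} (hn : 1 ≤ n)
    {w : L} (hw : w ∈ Sn B n) : ⁅B 0, w⁆ ∈ Sn B (n + 1) := by
  induction hw using Submodule.span_induction with
  | mem x hx =>
    obtain ⟨i, rfl⟩ := hx
    rw [ha (n + i) (le_trans hn (Nat.le_add_right n i))]
    exact B_mem_Sn B (by omega)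
  | zero => simp
  | add x y _ _ hx hy => rw [lie_add]; exact Submodule.add_mem _ hx hy
  | smul t x _ hx => rw [lie_smul]; exact Submodule.smul_mem _ t hx

lemma lie_consec_mem (ha : ∀ j, 1 ≤ j → ⁅B 0, B j⁆ = B (j + 1))
    (he : ∀ j, 1 ≤ j →
      ⁅B j, B (j + 1)⁆ ∈ Submodule.span K {x : L | ∃ i, 2 * j + 2 ≤ i ∧ x = B i}) :
    ∀ d j, 1 ≤ j → ⁅B j, B (j + 1 + d)⁆ ∈ Sn B (2 * j + 2 + d) := by
  intro d
  induction d using Nat.strong_induction_on with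
  | _ d IH =>
    intro j hj
    match d with
    | 0 =>
      have hs : Submodule.span K {x : L | ∃ i, 2 * j + 2 ≤ i ∧ x = B i} ≤ Sn B (2 * j + 2) := by
        rw [Submodule.span_le]
        rintro x ⟨i, hi, rfl⟩
        exact B_mem_Sn B hi
      exact hs (he j hj)
    | (d' + 1) =>
      have hm : 1 ≤ j + 1 + d' := by omega
      have key : ⁅B j, B (j + 1 + (d' + 1))⁆ =
          ⁅B 0, ⁅B j, B (j + 1 + d')⁆⁆ - ⁅B (j + 1), B (j + 1 + d')⁆ := by
        have hl := leibniz_lie (B 0) (B j) (B (j + 1 + d'))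
        rw [ha j hj, ha (j + 1 + d') hm] at hl
        have : j + 1 + d' + 1 = j + 1 + (d' + 1) := by omega
        rw [this] at hl
        rw [hl]
        abel
      rw [key]
      apply Submodule.sub_mem
      · have h1 := IH d' (by omega) j hj
        have h2 := lie_B0_mem ha (by omega : 1 ≤ 2 * j + 2 + d') h1
        have : 2 * j + 2 + d' + 1 = 2 * j + 2 + (d' + 1) := by omega
        rwa [this] at h2
      · match d' with
        | 0 => simp
        | (e + 1) =>
          have h3 := IH e (by omega) (j + 1) (by omega)
          have h4 : j + 1 + 1 + e = j + 1 + (e + 1) := by omega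
          rw [h4] at h3
          have h5 : 2 * (j + 1) + 2 + e = 2 * j + 2 + (e + 1 + 1) := by omega
          rwa [h5] at h3

lemma lie_BB_mem (ha : ∀ j, 1 ≤ j → ⁅B 0, B j⁆ = B (j + 1))
    (he : ∀ j, 1 ≤ j →
      ⁅B j, B (j + 1)⁆ ∈ Submodule.span K {x : L | ∃ i, 2 * j + 2 ≤ i ∧ x = B i})
    {i j : ℕ} (hi : 1 ≤ i) (hj : 1 ≤ j) : ⁅B i, B j⁆ ∈ Sn B (i + j + 1) := by
  rcases lt_trichotomy i j with h | rfl | h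
  · obtain ⟨d, rfl⟩ : ∃ d, j = i + 1 + d := ⟨j - i - 1, by omega⟩
    have h1 := lie_consec_mem ha he d i hi
    have h2 : 2 * i + 2 + d = i + (i + 1 + d) + 1 := by omega
    rwa [h2] at h1
  · rw [lie_self]; exact Submodule.zero_mem _
  · obtain ⟨d, rfl⟩ : ∃ d, i = j + 1 + d := ⟨i - j - 1, by omega⟩
    have h1 := lie_consec_mem ha he d j hj
    have h2 : 2 * j + 2 + d = j + 1 + d + j + 1 := by omega
    rw [h2] at h1
    rw [← lie_skew]
    exact Submodule.neg_mem _ h1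

section Lcs

variable (ha : ∀ j, 1 ≤ j → ⁅B 0, B j⁆ = B (j + 1))
    (he : ∀ j, 1 ≤ j →
      ⁅B j, B (j + 1)⁆ ∈ Submodule.span K {x : L | ∃ i, 2 * j + 2 ≤ i ∧ x = B i})

include ha he

lemma lie_Bi_mem {i : ℕ} (hi : 1 ≤ i) {n : ℕ} (hn : 1 ≤ n) {w : L} (hw : w ∈ Sn B n) :
    ⁅B i, w⁆ ∈ Sn B (n + 1) := by
  induction hw using Submodule.span_induction with
  | mem x hx =>
    obtain ⟨k, rfl⟩ := hx
    exact Sn_mono B (by omega) (lie_BB_mem ha he hi (by omega : 1 ≤ n + k))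
  | zero => simp
  | add x y _ _ hx hy => rw [lie_add]; exact Submodule.add_mem _ hx hy
  | smul t x _ hx => rw [lie_smul]; exact Submodule.smul_mem _ t hx

lemma lie_any_mem (y : L) {n : ℕ} (hn : 1 ≤ n) {w : L} (hw : w ∈ Sn B n) :
    ⁅y, w⁆ ∈ Sn B (n + 1) := by
  have hy : y ∈ Submodule.span K (Set.range B) := by rw [B.span_eq]; trivial
  induction hy using Submodule.span_induction with
  | mem x hx =>
    obtain ⟨i, rfl⟩ := hx
    rcases Nat.eq_zero_or_pos i with rfl | hi
    · exact lie_B0_mem ha hn hw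
    · exact lie_Bi_mem ha he hi hn hw
  | zero => simp
  | add x y _ _ hx hy => rw [add_lie]; exact Submodule.add_mem _ hx hy
  | smul t x _ hx => rw [smul_lie]; exact Submodule.smul_mem _ t hx

lemma lie_any_any_mem (x y : L) : ⁅x, y⁆ ∈ Sn B 2 := by
  have hy : y ∈ Submodule.span K (Set.range B) := by rw [B.span_eq]; trivial
  induction hy using Submodule.span_induction with
  | mem w hw =>
    obtain ⟨j, rfl⟩ := hw
    have hx : x ∈ Submodule.span K (Set.range B) := by rw [B.span_eq]; trivial
    induction hx using Submodule.span_induction with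
    | mem v hv =>
      obtain ⟨i, rfl⟩ := hv
      rcases Nat.eq_zero_or_pos i with rfl | hi
      · rcases Nat.eq_zero_or_pos j with rfl | hj
        · simp
        · rw [ha j hj]; exact B_mem_Sn B (by omega)
      · rcases Nat.eq_zero_or_pos j with rfl | hj
        · rw [← lie_skew, ha i hi]
          exact Submodule.neg_mem _ (B_mem_Sn B (by omega))
        · exact Sn_mono B (by omega) (lie_BB_mem ha he hi hj)
    | zero => simp
    | add v v' _ _ hv hv' => rw [add_lie]; exact Submodule.add_mem _ hv hv'
    | smul t v _ hv => rw [smul_lie]; exact Submodule.smul_mem _ t hv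
  | zero => simp
  | add w w' _ _ hw hw' => rw [lie_add]; exact Submodule.add_mem _ hw hw'
  | smul t w _ hw => rw [lie_smul]; exact Submodule.smul_mem _ t hw

lemma lcs_le_Sn : ∀ n, ∀ m ∈ lowerCentralSeries K L L (n + 1), m ∈ Sn B (n + 2) := by
  intro n
  induction n with
  | zero =>
    intro m hm
    rw [LieModule.lowerCentralSeries_succ, ← LieSubmodule.mem_toSubmodule,
      LieSubmodule.lieIdeal_oper_eq_linear_span'] at hm
    refine Submodule.span_le.mpr ?_ hm
    rintro m' ⟨x, -, w, -, rfl⟩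
    exact lie_any_any_mem ha he x w
  | succ n IH =>
    intro m hm
    rw [LieModule.lowerCentralSeries_succ, ← LieSubmodule.mem_toSubmodule,
      LieSubmodule.lieIdeal_oper_eq_linear_span'] at hm
    refine Submodule.span_le.mpr ?_ hm
    rintro m' ⟨x, -, w, hw, rfl⟩
    exact lie_any_mem ha he x (by omega) (IH w hw)

end Lcs

section PiL

variable (B)

noncomputable def piL : L →ₗ[K] Polynomial K :=
  (Finsupp.linearCombination K fun s : ℕ => (X : Polynomial K) ^ s).comp
    (B.repr : L →ₗ[K] (ℕ →₀ K))

lemma piL_coeff (w : L) (t : ℕ) : (piL B w).coeff t = B.repr w t := by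
  rw [piL]
  simp only [LinearMap.comp_apply, LinearEquiv.coe_coe, Finsupp.linearCombination_apply]
  rw [Finsupp.sum, Polynomial.finset_sum_coeff]
  simp only [Polynomial.coeff_smul, Polynomial.coeff_X_pow, smul_eq_mul, mul_ite, mul_one,
    mul_zero]
  rw [Finset.sum_ite_eq ((B.repr w).support) t (fun s => B.repr w s)]
  by_cases h : t ∈ (B.repr w).support
  · simp [h]
  · simp [h, Finsupp.notMem_support_iff.mp h]

lemma piL_eq_zero_iff {w : L} : piL B w = 0 ↔ w = 0 := by
  constructor
  · intro h
    have : B.repr w = 0 := by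
      ext t
      have := piL_coeff B w t
      rw [h] at this
      simpa using this.symm
    simpa using (B.repr.map_eq_zero_iff).mp this
  · rintro rfl; simp

lemma piL_B (s : ℕ) : piL B (B s) = X ^ s := by
  simp [piL, Finsupp.linearCombination_single]

variable {B}

lemma piL_lie_B0 (ha : ∀ j, 1 ≤ j → ⁅B 0, B j⁆ = B (j + 1)) {w : L} (hw : w ∈ Sn B 1) :
    piL B ⁅B 0, w⁆ = X * piL B w := by
  induction hw using Submodule.span_induction with
  | mem x hx =>
    obtain ⟨i, rfl⟩ := hx
    rw [ha (1 + i) (by omega), piL_B, piL_B, pow_succ, mul_comm]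
  | zero => simp
  | add x y _ _ hx hy => rw [lie_add, map_add, map_add, hx, hy, mul_add]
  | smul t x _ hx => rw [lie_smul, map_smul, map_smul, hx, Polynomial.smul_eq_C_mul,
      Polynomial.smul_eq_C_mul]; ring

lemma piL_dvd_of_mem_Sn {n : ℕ} {w : L} (hw : w ∈ Sn B (n + 1)) :
    (X : Polynomial K) ^ n ∣ piL B w := by
  induction hw using Submodule.span_induction with
  | mem x hx =>
    obtain ⟨i, rfl⟩ := hx
    rw [piL_B]
    exact pow_dvd_pow X (by omega)
  | zero => simp
  | add x y _ _ hx hy => rw [map_add]; exact dvd_add hx hy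
  | smul t x _ hx =>
    rw [map_smul, Polynomial.smul_eq_C_mul]
    exact Dvd.dvd.mul_left hx _

end PiL

section BP

variable {R : Type*} [CommRing R]

noncomputable def BP (c : ℕ → ℕ → R) (f g : Polynomial R) : R :=
  f.sum fun i a => g.sum fun j b => a * b * c i j

variable (c : ℕ → ℕ → R)

lemma BP_def (f g : Polynomial R) :
    BP c f g = ∑ i ∈ f.support, ∑ j ∈ g.support, f.coeff i * g.coeff j * c i j := by
  rw [BP, Polynomial.sum]
  apply Finset.sum_congr rfl
  intro i _
  rw [Polynomial.sum]

lemma BP_zero_left (g : Polynomial R) : BP c 0 g = 0 := by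
  simp [BP]

lemma BP_zero_right (f : Polynomial R) : BP c f 0 = 0 := by
  simp [BP, Polynomial.sum]

lemma BP_add_left (f₁ f₂ g : Polynomial R) : BP c (f₁ + f₂) g = BP c f₁ g + BP c f₂ g := by
  unfold BP
  exact Polynomial.sum_add_index f₁ f₂ _ (fun i => by simp [Polynomial.sum])
    (fun i b₁ b₂ => by simp [Polynomial.sum, add_mul, Finset.sum_add_distrib])

lemma BP_flip (f g : Polynomial R) : BP c f g = BP (fun j i => c i j) g f := by
  rw [BP_def, BP_def, Finset.sum_comm]
  apply Finset.sum_congr rfl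
  intro j _
  apply Finset.sum_congr rfl
  intro i _
  ring

lemma BP_add_right (f g₁ g₂ : Polynomial R) : BP c f (g₁ + g₂) = BP c f g₁ + BP c f g₂ := by
  rw [BP_flip c f (g₁ + g₂), BP_add_left, ← BP_flip c f g₁, ← BP_flip c f g₂]

lemma BP_mono_mono (i j : ℕ) (a b : R) :
    BP c (Polynomial.monomial i a) (Polynomial.monomial j b) = a * b * c i j := by
  rw [BP, Polynomial.sum_monomial_index _ _ (by simp [Polynomial.sum]),
    Polynomial.sum_monomial_index _ _ (by simp)]

lemma BP_CXpow (i j : ℕ) (a b : R) :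
    BP c (Polynomial.C a * Polynomial.X ^ i) (Polynomial.C b * Polynomial.X ^ j) =
      a * b * c i j := by
  rw [Polynomial.C_mul_X_pow_eq_monomial, Polynomial.C_mul_X_pow_eq_monomial, BP_mono_mono]

lemma BP_Cmul_left (a : R) (f g : Polynomial R) :
    BP c (Polynomial.C a * f) g = a * BP c f g := by
  induction f using Polynomial.induction_on' with
  | add p q hp hq => rw [mul_add, BP_add_left, hp, hq, BP_add_left, mul_add]
  | monomial n b =>
    rw [Polynomial.C_mul_monomial, BP, Polynomial.sum_monomial_index _ _
      (by simp [Polynomial.sum]), BP, Polynomial.sum_monomial_index _ _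
      (by simp [Polynomial.sum])]
    rw [Polynomial.sum, Polynomial.sum, Finset.mul_sum]
    apply Finset.sum_congr rfl
    intro j _
    ring

lemma BP_Cmul_right (a : R) (f g : Polynomial R) :
    BP c f (Polynomial.C a * g) = a * BP c f g := by
  rw [BP_flip c f (Polynomial.C a * g), BP_Cmul_left, ← BP_flip c f g]

lemma BP_neg_right (f g : Polynomial R) : BP c f (-g) = -BP c f g := by
  have h : (-g : Polynomial R) = Polynomial.C (-1) * g := by
    rw [map_neg, map_one, neg_mul, one_mul]
  rw [h, BP_Cmul_right]
  ring

lemma BP_sub_right (f g₁ g₂ : Polynomial R) : BP c f (g₁ - g₂) = BP c f g₁ - BP c f g₂ := by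
  rw [sub_eq_add_neg, BP_add_right, BP_neg_right, sub_eq_add_neg]

lemma BP_finset_sum_left {ι : Type*} (t : Finset ι) (F : ι → Polynomial R) (g : Polynomial R) :
    BP c (∑ s ∈ t, F s) g = ∑ s ∈ t, BP c (F s) g := by
  classical
  induction t using Finset.induction_on with
  | empty => simp [BP_zero_left]
  | insert _ _ hns ih =>
    rw [Finset.sum_insert hns, Finset.sum_insert hns, BP_add_left, ih]

lemma BP_finset_sum_right {ι : Type*} (t : Finset ι) (f : Polynomial R) (G : ι → Polynomial R) :
    BP c f (∑ s ∈ t, G s) = ∑ s ∈ t, BP c f (G s) := by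
  classical
  induction t using Finset.induction_on with
  | empty => simp [BP_zero_right]
  | insert _ _ hns ih =>
    rw [Finset.sum_insert hns, Finset.sum_insert hns, BP_add_right, ih]

end BP

section Adj

variable {R : Type*} [CommRing R] (c : ℕ → ℕ → R) (z : R)

/-- the substitution `u ↦ z - u`. -/
noncomputable def Czu (z : R) : Polynomial R := Polynomial.C z - Polynomial.X

lemma Czu_comp_Czu : (Czu z).comp (Czu z) = Polynomial.X := by
  simp [Czu, Polynomial.sub_comp]

variable (hc3 : ∀ i j, 1 ≤ i → 1 ≤ j → c (i + 1) j + c i (j + 1) = z * c i j)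

include hc3

lemma BP_X_shift (f g : Polynomial R) :
    BP c (Polynomial.X * (Polynomial.X * f)) (Polynomial.X * g)
      + BP c (Polynomial.X * f) (Polynomial.X * (Polynomial.X * g))
      = z * BP c (Polynomial.X * f) (Polynomial.X * g) := by
  induction f using Polynomial.induction_on' generalizing g with
  | add p q hp hq =>
    rw [mul_add Polynomial.X p q,
      show Polynomial.X * (Polynomial.X * p + Polynomial.X * q)
        = Polynomial.X * (Polynomial.X * p) + Polynomial.X * (Polynomial.X * q) by ring,
      BP_add_left, BP_add_left, BP_add_left]
    linear_combination hp g + hq g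
  | monomial i a =>
    induction g using Polynomial.induction_on' with
    | add p q hp hq =>
      rw [mul_add Polynomial.X p q,
        show Polynomial.X * (Polynomial.X * p + Polynomial.X * q)
          = Polynomial.X * (Polynomial.X * p) + Polynomial.X * (Polynomial.X * q) by ring,
        BP_add_right, BP_add_right, BP_add_right]
      linear_combination hp + hq
    | monomial j b =>
      rw [← Polynomial.C_mul_X_pow_eq_monomial, ← Polynomial.C_mul_X_pow_eq_monomial]
      have e1 : Polynomial.X * (Polynomial.X * (Polynomial.C a * Polynomial.X ^ i))
          = Polynomial.C a * Polynomial.X ^ (i + 2) := by ring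
      have e2 : Polynomial.X * (Polynomial.C a * Polynomial.X ^ i)
          = Polynomial.C a * Polynomial.X ^ (i + 1) := by ring
      have e3 : Polynomial.X * (Polynomial.X * (Polynomial.C b * Polynomial.X ^ j))
          = Polynomial.C b * Polynomial.X ^ (j + 2) := by ring
      have e4 : Polynomial.X * (Polynomial.C b * Polynomial.X ^ j)
          = Polynomial.C b * Polynomial.X ^ (j + 1) := by ring
      rw [e1, e2, e3, e4, BP_CXpow, BP_CXpow, BP_CXpow]
      have h := hc3 (i + 1) (j + 1) (by omega) (by omega)
      have h2 : i + 1 + 1 = i + 2 := by omega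
      have h3 : j + 1 + 1 = j + 2 := by omega
      rw [h2, h3] at h
      linear_combination (a * b) * h

lemma BP_X_left (f g : Polynomial R) (hf : f.coeff 0 = 0) (hg : g.coeff 0 = 0) :
    BP c (Polynomial.X * f) g = BP c f (Czu z * g) := by
  obtain ⟨f₁, rfl⟩ : ∃ f₁, Polynomial.X * f₁ = f := by
    refine ⟨f.divX, ?_⟩
    have := Polynomial.X_mul_divX_add f
    rwa [hf, map_zero, add_zero] at this
  obtain ⟨g₁, rfl⟩ : ∃ g₁, Polynomial.X * g₁ = g := by
    refine ⟨g.divX, ?_⟩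
    have := Polynomial.X_mul_divX_add g
    rwa [hg, map_zero, add_zero] at this
  have expand : Czu z * (Polynomial.X * g₁)
      = Polynomial.C z * (Polynomial.X * g₁) - Polynomial.X * (Polynomial.X * g₁) := by
    rw [Czu]; ring
  rw [expand, BP_sub_right, BP_Cmul_right]
  linear_combination BP_X_shift c z hc3 f₁ g₁

lemma BP_Xpow_adj : ∀ (n : ℕ) (f g : Polynomial R), f.coeff 0 = 0 → g.coeff 0 = 0 →
    BP c (Polynomial.X ^ n * f) g = BP c f (Czu z ^ n * g) := by
  intro n
  induction n with
  | zero => intro f g _ _; simp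
  | succ n IH =>
    intro f g hf hg
    have e1 : Polynomial.X ^ (n + 1) * f = Polynomial.X ^ n * (Polynomial.X * f) := by ring
    rw [e1, IH (Polynomial.X * f) g (by rw [Polynomial.mul_coeff_zero]; simp) hg,
      BP_X_left c z hc3 f (Czu z ^ n * g) hf
        (by rw [Polynomial.mul_coeff_zero, hg, mul_zero])]
    congr 1
    ring

lemma BP_adj (h f g : Polynomial R) (hf : f.coeff 0 = 0) (hg : g.coeff 0 = 0) :
    BP c (h * f) g = BP c f (h.comp (Czu z) * g) := by
  induction h using Polynomial.induction_on' with
  | add p q hp hq =>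
    rw [add_mul, BP_add_left, hp, hq, Polynomial.add_comp, add_mul, BP_add_right]
  | monomial n a =>
    rw [← Polynomial.C_mul_X_pow_eq_monomial]
    have e1 : Polynomial.C a * Polynomial.X ^ n * f
        = Polynomial.C a * (Polynomial.X ^ n * f) := by ring
    rw [e1, BP_Cmul_left, BP_Xpow_adj c z hc3 n f g hf hg]
    have e2 : (Polynomial.C a * Polynomial.X ^ n).comp (Czu z) = Polynomial.C a * Czu z ^ n := by
      simp [Polynomial.mul_comp, Polynomial.pow_comp]
    rw [e2]
    have e3 : Polynomial.C a * Czu z ^ n * g = Polynomial.C a * (Czu z ^ n * g) := by ring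
    rw [e3, BP_Cmul_right]

end Adj

section Antisym

variable {R : Type*} [CommRing R] (c : ℕ → ℕ → R)
variable (hc4 : ∀ i j, c i j = - c j i)

include hc4

lemma BP_antisymm (f g : Polynomial R) : BP c f g = - BP c g f := by
  rw [BP_def, BP_def, Finset.sum_comm, ← Finset.sum_neg_distrib]
  apply Finset.sum_congr rfl
  intro j _
  rw [← Finset.sum_neg_distrib]
  apply Finset.sum_congr rfl
  intro i _
  rw [hc4 i j]
  ring

end Antisym

section Bezout

variable {R : Type*} [CommRing R]

lemma coeff0_Xpow_mul (m : ℕ) (w : Polynomial R) :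
    (Polynomial.X ^ (m + 1) * w).coeff 0 = 0 := by
  rw [Polynomial.mul_coeff_zero, Polynomial.coeff_X_pow, if_neg (by omega), zero_mul]

lemma bezout_pow_X (E : Polynomial R) :
    ∀ n, ∃ A B : Polynomial R, Polynomial.C ((E.coeff 0) ^ n) = Polynomial.X ^ n * A + E * B := by
  have hE : Polynomial.C (E.coeff 0) = E - Polynomial.X * E.divX := by
    have h := Polynomial.X_mul_divX_add E
    linear_combination h
  intro n
  induction n with
  | zero => exact ⟨1, 0, by simp⟩
  | succ n IH =>
    obtain ⟨A, B, hAB⟩ := IH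
    refine ⟨-(E.divX * A), Polynomial.X ^ n * A + E * B - Polynomial.X * E.divX * B, ?_⟩
    have h2 : Polynomial.C ((E.coeff 0) ^ (n + 1))
        = Polynomial.C ((E.coeff 0) ^ n) * Polynomial.C (E.coeff 0) := by
      rw [← map_mul, pow_succ]
    rw [h2, hAB, hE]
    ring

lemma bezout_pow_root (E : Polynomial R) (z : R) :
    ∀ n, ∃ A B : Polynomial R, Polynomial.C ((E.eval z) ^ n) = (Czu z) ^ n * A + E * B := by
  obtain ⟨q0, hq0⟩ : (Polynomial.X - Polynomial.C z) ∣ (E - Polynomial.C (E.eval z)) := by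
    rw [Polynomial.dvd_iff_isRoot]
    simp [Polynomial.IsRoot]
  have hE : Polynomial.C (E.eval z) = E - Czu z * (-q0) := by
    rw [Czu]
    linear_combination -hq0
  intro n
  induction n with
  | zero => exact ⟨1, 0, by simp⟩
  | succ n IH =>
    obtain ⟨A, B, hAB⟩ := IH
    refine ⟨-(-q0 * A), Czu z ^ n * A + E * B - Czu z * (-q0) * B, ?_⟩
    have h2 : Polynomial.C ((E.eval z) ^ (n + 1))
        = Polynomial.C ((E.eval z) ^ n) * Polynomial.C (E.eval z) := by
      rw [← map_mul, pow_succ]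
    rw [h2, hAB, hE]
    ring

end Bezout

section Engine

open Polynomial

variable {K : Type*} [Field K]

theorem engine (c : ℕ → ℕ → Polynomial K)
    (hc3 : ∀ i j, 1 ≤ i → 1 ≤ j → c (i + 1) j + c i (j + 1) = Polynomial.X * c i j)
    (hc4 : ∀ i j, c i j = - c j i)
    (hdvd : ∀ i j, 1 ≤ i → 1 ≤ j → (Polynomial.X : Polynomial K) ^ (i + j) ∣ c i j)
    (xc : ℕ →₀ K) (hxc0 : xc 0 = 0) (hxcne : xc ≠ 0)
    (xpoly : Polynomial (Polynomial K))
    (hxp : xpoly = xc.sum fun s a => Polynomial.C (Polynomial.C a) * Polynomial.X ^ s)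
    (hcomm : ∀ r r' : ℕ, BP c (Polynomial.X ^ r * xpoly) (Polynomial.X ^ r' * xpoly) = 0) :
    ∃ N, 1 ≤ N ∧ ∀ i j, N ≤ i → N ≤ j → c i j = 0 := by
  classical
  -- the "z" in the coefficient ring
  set z : Polynomial K := Polynomial.X with hzdef
  set Cz : Polynomial (Polynomial K) := Czu z with hCzdef
  -- support minimum
  have hsupp : xc.support.Nonempty := Finsupp.support_nonempty_iff.mpr hxcne
  set p : ℕ := xc.support.min' hsupp with hpdef
  have hpmem : p ∈ xc.support := Finset.min'_mem _ _
  have hple : ∀ s ∈ xc.support, p ≤ s := fun s hs => Finset.min'_le _ s hs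
  have hxcp : xc p ≠ 0 := Finsupp.mem_support_iff.mp hpmem
  have hp1 : 1 ≤ p := by
    rcases Nat.eq_zero_or_pos p with h0 | h
    · exact absurd (h0 ▸ hxcp) (by simp [hxc0])
    · exact h
  -- xhat with X^p * xhat = xpoly
  set xhat : Polynomial (Polynomial K) :=
    xc.sum fun s a => Polynomial.C (Polynomial.C a) * Polynomial.X ^ (s - p) with hxhatdef
  have hxhat : Polynomial.X ^ p * xhat = xpoly := by
    rw [hxp, hxhatdef, Finsupp.sum, Finsupp.sum, Finset.mul_sum]
    apply Finset.sum_congr rfl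
    intro s hs
    have hps : p ≤ s := hple s hs
    have hpss : p + (s - p) = s := by omega
    calc Polynomial.X ^ p * (Polynomial.C (Polynomial.C (xc s)) * Polynomial.X ^ (s - p))
        = Polynomial.C (Polynomial.C (xc s)) * Polynomial.X ^ (p + (s - p)) := by
          rw [pow_add]; ring
      _ = _ := by rw [hpss]
  have hxp0 : xpoly.coeff 0 = 0 := by
    rw [hxp, Finsupp.sum, Polynomial.finset_sum_coeff]
    apply Finset.sum_eq_zero
    intro s hs
    have hs1 : s ≠ 0 := by
      intro h
      rw [h] at hs
      exact (Finsupp.mem_support_iff.mp hs) hxc0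
    rw [Polynomial.coeff_C_mul, Polynomial.coeff_X_pow, if_neg (by omega), mul_zero]
  have hxhat0 : xhat.coeff 0 = Polynomial.C (xc p) := by
    rw [hxhatdef, Finsupp.sum, Polynomial.finset_sum_coeff]
    rw [Finset.sum_eq_single p]
    · rw [Nat.sub_self, pow_zero, mul_one, Polynomial.coeff_C]
      simp
    · intro s hs hsne
      have hps : p ≤ s := hple s hs
      rw [Polynomial.coeff_C_mul, Polynomial.coeff_X_pow, if_neg (by omega), mul_zero]
    · intro h
      exact absurd hpmem h
  -- xz = "xhat evaluated at z"
  set xz : Polynomial K := xc.sum fun s a => Polynomial.C a * Polynomial.X ^ (s - p) with hxzdef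
  have hxz0 : xz.coeff 0 = xc p := by
    rw [hxzdef, Finsupp.sum, Polynomial.finset_sum_coeff]
    rw [Finset.sum_eq_single p]
    · rw [Nat.sub_self, pow_zero, mul_one, Polynomial.coeff_C]
      simp
    · intro s hs hsne
      have hps : p ≤ s := hple s hs
      rw [Polynomial.coeff_C_mul, Polynomial.coeff_X_pow, if_neg (by omega), mul_zero]
    · intro h
      exact absurd hpmem h
  have hxhatevalz : xhat.eval z = xz := by
    rw [hxhatdef, hxzdef, Finsupp.sum, Finsupp.sum, Polynomial.eval_finset_sum]
    apply Finset.sum_congr rfl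
    intro s _
    rw [Polynomial.eval_mul, Polynomial.eval_C, Polynomial.eval_pow, Polynomial.eval_X]
  have hxhateval0 : xhat.eval 0 = Polynomial.C (xc p) := by
    rw [← Polynomial.coeff_zero_eq_eval_zero, hxhat0]
  -- E and its values
  set E : Polynomial (Polynomial K) := xhat * xhat.comp Cz with hEdef
  have hCzeval0 : Cz.eval 0 = z := by
    rw [hCzdef, Czu, Polynomial.eval_sub, Polynomial.eval_C, Polynomial.eval_X, sub_zero]
  have hCzevalz : Cz.eval z = 0 := by
    rw [hCzdef, Czu, Polynomial.eval_sub, Polynomial.eval_C, Polynomial.eval_X, sub_self]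
  have hE0 : E.coeff 0 = Polynomial.C (xc p) * xz := by
    rw [hEdef, Polynomial.mul_coeff_zero, hxhat0, Polynomial.coeff_zero_eq_eval_zero,
      Polynomial.eval_comp, hCzeval0, hxhatevalz]
  have hE00 : (E.coeff 0).coeff 0 = xc p * xc p := by
    rw [hE0, Polynomial.mul_coeff_zero, Polynomial.coeff_C, if_pos rfl, hxz0]
  have hE0ne : E.coeff 0 ≠ 0 := by
    intro h
    rw [h] at hE00
    exact (mul_ne_zero hxcp hxcp) hE00.symm
  have hXndvdE0 : ¬ (Polynomial.X : Polynomial K) ∣ E.coeff 0 := by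
    rw [Polynomial.X_dvd_iff]
    intro h
    rw [h] at hE00
    exact (mul_ne_zero hxcp hxcp) hE00.symm
  have hEz : E.eval z = xz * Polynomial.C (xc p) := by
    rw [hEdef, Polynomial.eval_mul, hxhatevalz, Polynomial.eval_comp, hCzevalz, hxhateval0]
  have hEzne : E.eval z ≠ 0 := by
    intro h
    have : (E.eval z).coeff 0 = xc p * xc p := by
      rw [hEz, Polynomial.mul_coeff_zero, hxz0, Polynomial.coeff_C, if_pos rfl]
    rw [h] at this
    exact (mul_ne_zero hxcp hxcp) this.symm
  have hCzCz : Cz.comp Cz = Polynomial.X := by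
    rw [hCzdef]; exact Czu_comp_Czu z
  have hEcomp : E.comp Cz = E := by
    rw [hEdef, Polynomial.mul_comp, Polynomial.comp_assoc, hCzCz, Polynomial.comp_X, mul_comm]
  -- G, F
  set G : Polynomial (Polynomial K) := Polynomial.X ^ p * Cz ^ p with hGdef
  have hGcomp : G.comp Cz = G := by
    rw [hGdef, Polynomial.mul_comp, Polynomial.pow_comp, Polynomial.pow_comp, Polynomial.X_comp,
      hCzCz, mul_comm]
  set F : Polynomial (Polynomial K) := xpoly * xpoly.comp Cz with hFdef
  have hFGE : F = G * E := by
    rw [hFdef, hGdef, hEdef, ← hxhat, Polynomial.mul_comp, Polynomial.pow_comp, Polynomial.X_comp]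
    ring
  have hxcomp : (xpoly.comp Cz).comp Cz = xpoly := by
    rw [Polynomial.comp_assoc, hCzCz, Polynomial.comp_X]
  -- the full commutation hypothesis
  have hH : ∀ f g : Polynomial (Polynomial K), BP c (f * xpoly) (g * xpoly) = 0 := by
    intro f g
    induction f using Polynomial.induction_on' generalizing g with
    | add f₁ f₂ h1 h2 => rw [add_mul, BP_add_left, h1, h2, add_zero]
    | monomial r a =>
      induction g using Polynomial.induction_on' with
      | add g₁ g₂ h1 h2 => rw [add_mul, BP_add_right, h1, h2, add_zero]
      | monomial r' b =>
        rw [← Polynomial.C_mul_X_pow_eq_monomial, ← Polynomial.C_mul_X_pow_eq_monomial]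
        rw [show Polynomial.C a * Polynomial.X ^ r * xpoly
            = Polynomial.C a * (Polynomial.X ^ r * xpoly) by ring,
          show Polynomial.C b * Polynomial.X ^ r' * xpoly
            = Polynomial.C b * (Polynomial.X ^ r' * xpoly) by ring,
          BP_Cmul_left, BP_Cmul_right, hcomm r r', mul_zero, mul_zero]
  -- F kills BP on the left
  have hHF : ∀ w g : Polynomial (Polynomial K), g.coeff 0 = 0 → BP c (F * w) g = 0 := by
    intro w g hg
    have e1 : F * w = ((xpoly.comp Cz) * w) * xpoly := by rw [hFdef]; ring
    rw [e1, BP_adj c z hc3 _ xpoly g hxp0 hg]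
    have e2 : (((xpoly.comp Cz) * w).comp (Czu z)) * g = (w.comp Cz * g) * xpoly := by
      rw [Polynomial.mul_comp, ← hCzdef, hxcomp]
      ring
    rw [e2]
    have h := hH 1 (w.comp Cz * g)
    rwa [one_mul] at h
  -- Bezout combination
  obtain ⟨A1, B1, hAB1⟩ := bezout_pow_X E p
  obtain ⟨A2, B2, hAB2⟩ := bezout_pow_root E z p
  set dd : Polynomial K := (E.coeff 0) ^ p * (E.eval z) ^ p with hdddef
  set A3 : Polynomial (Polynomial K) := A1 * A2 with hA3def
  set B3 : Polynomial (Polynomial K) :=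
    Polynomial.X ^ p * A1 * B2 + Cz ^ p * A2 * B1 + E * B1 * B2 with hB3def
  have hdd3 : Polynomial.C dd = G * A3 + E * B3 := by
    rw [hdddef, map_mul, hAB1, hAB2, ← hCzdef, hGdef, hA3def, hB3def]
    ring
  have hddne : dd ≠ 0 := by
    rw [hdddef]
    exact mul_ne_zero (pow_ne_zero _ hE0ne) (pow_ne_zero _ hEzne)
  have hG0 : G.coeff 0 = 0 := by
    obtain ⟨p', hp'⟩ : ∃ p', p = p' + 1 := ⟨p - 1, by omega⟩
    rw [hGdef, hp', coeff0_Xpow_mul]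
  have hcoefGA : ∀ b : ℕ, (Polynomial.X ^ b * (G * A3)).coeff 0 = 0 := by
    intro b
    rw [Polynomial.mul_coeff_zero, Polynomial.mul_coeff_zero, hG0, zero_mul, mul_zero]
  have hcoefEB : ∀ a b : ℕ, (Polynomial.X ^ (a + 1 + b) * (E * B3)).coeff 0 = 0 := by
    intro a b
    rw [show a + 1 + b = (a + b) + 1 by omega]
    exact coeff0_Xpow_mul _ _
  -- the three vanishing mixed terms
  have hv1 : ∀ a b : ℕ,
      BP c (Polynomial.X ^ (p + 1 + a) * (E * B3)) (Polynomial.X ^ (p + 1 + b) * (E * B3))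
        = 0 := by
    intro a b
    have e1 : Polynomial.X ^ (p + 1 + a) * (E * B3)
        = (Polynomial.X ^ (p + a) * (E * B3)) * Polynomial.X := by ring
    rw [e1, BP_adj c z hc3 _ _ _ Polynomial.coeff_X_zero (hcoefEB p b), ← hCzdef]
    have e2 : ((Polynomial.X ^ (p + a) * (E * B3)).comp Cz)
          * (Polynomial.X ^ (p + 1 + b) * (E * B3))
        = F * (Cz ^ a * (B3.comp Cz) * (Polynomial.X ^ (1 + b)) * E * B3) := by
      rw [Polynomial.mul_comp, Polynomial.pow_comp, Polynomial.X_comp, Polynomial.mul_comp,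
        hEcomp, hFGE, hGdef]
      ring
    rw [e2, BP_antisymm c hc4, hHF _ _ Polynomial.coeff_X_zero, neg_zero]
  have hv2 : ∀ a b : ℕ,
      BP c (Polynomial.X ^ (p + 1 + a) * (E * B3)) (Polynomial.X ^ (p + 1 + b) * (G * A3))
        = 0 := by
    intro a b
    have e1 : Polynomial.X ^ (p + 1 + a) * (E * B3)
        = (Polynomial.X ^ (p + a) * (E * B3)) * Polynomial.X := by ring
    rw [e1, BP_adj c z hc3 _ _ _ Polynomial.coeff_X_zero (hcoefGA _), ← hCzdef]
    have e2 : ((Polynomial.X ^ (p + a) * (E * B3)).comp Cz)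
          * (Polynomial.X ^ (p + 1 + b) * (G * A3))
        = F * (Cz ^ (p + a) * (B3.comp Cz) * (Polynomial.X ^ (p + 1 + b)) * A3) := by
      rw [Polynomial.mul_comp, Polynomial.pow_comp, Polynomial.X_comp, Polynomial.mul_comp,
        hEcomp, hFGE, hGdef]
      ring
    rw [e2, BP_antisymm c hc4, hHF _ _ Polynomial.coeff_X_zero, neg_zero]
  have hv3 : ∀ a b : ℕ,
      BP c (Polynomial.X ^ (p + 1 + a) * (G * A3)) (Polynomial.X ^ (p + 1 + b) * (E * B3))
        = 0 := by
    intro a b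
    have e1 : Polynomial.X ^ (p + 1 + a) * (G * A3)
        = (Polynomial.X ^ (p + a) * (G * A3)) * Polynomial.X := by ring
    rw [e1, BP_adj c z hc3 _ _ _ Polynomial.coeff_X_zero (hcoefEB p b), ← hCzdef]
    have e2 : ((Polynomial.X ^ (p + a) * (G * A3)).comp Cz)
          * (Polynomial.X ^ (p + 1 + b) * (E * B3))
        = F * (Cz ^ (p + a) * (A3.comp Cz) * (Polynomial.X ^ (p + 1 + b)) * B3) := by
      rw [Polynomial.mul_comp, Polynomial.pow_comp, Polynomial.X_comp, Polynomial.mul_comp,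
        hGcomp, hFGE]
      ring
    rw [e2, BP_antisymm c hc4, hHF _ _ Polynomial.coeff_X_zero, neg_zero]
  -- BP on pure monomials
  have hBPXX : ∀ i j : ℕ, BP c (Polynomial.X ^ i) (Polynomial.X ^ j) = c i j := by
    intro i j
    rw [Polynomial.X_pow_eq_monomial, Polynomial.X_pow_eq_monomial, BP_mono_mono, one_mul,
      one_mul]
  set eta : ℕ → ℕ → Polynomial K := fun i j =>
    BP c (Polynomial.X ^ i * (G * A3)) (Polynomial.X ^ j * (G * A3)) with hetadef
  have hkey : ∀ a b : ℕ, dd * (dd * c (p + 1 + a) (p + 1 + b)) = eta (p + 1 + a) (p + 1 + b) := by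
    intro a b
    have hsplit : ∀ i : ℕ, Polynomial.C dd * Polynomial.X ^ i
        = Polynomial.X ^ i * (G * A3) + Polynomial.X ^ i * (E * B3) := by
      intro i; rw [hdd3]; ring
    have h1 : BP c (Polynomial.C dd * Polynomial.X ^ (p + 1 + a))
        (Polynomial.C dd * Polynomial.X ^ (p + 1 + b)) = dd * (dd * c (p + 1 + a) (p + 1 + b)) := by
      rw [BP_Cmul_left, BP_Cmul_right, hBPXX]
    rw [← h1, hsplit, hsplit, BP_add_left, BP_add_right, BP_add_right,
      hv1 a b, hv2 a b, hv3 a b]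
    have : eta (p + 1 + a) (p + 1 + b)
        = BP c (Polynomial.X ^ (p + 1 + a) * (G * A3))
            (Polynomial.X ^ (p + 1 + b) * (G * A3)) := rfl
    rw [this]
    ring
  -- the recurrence
  have hrec : ∀ (i b : ℕ),
      (∑ l ∈ E.support, E.coeff l * eta (i + l) (p + 1 + b)) = 0 := by
    intro i b
    have h0 : BP c (E * (Polynomial.X ^ i * (G * A3)))
        (Polynomial.X ^ (p + 1 + b) * (G * A3)) = 0 := by
      have e : E * (Polynomial.X ^ i * (G * A3)) = F * (Polynomial.X ^ i * A3) := by
        rw [hFGE]; ring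
      rw [e]
      exact hHF _ _ (hcoefGA _)
    have hEexp : E * (Polynomial.X ^ i * (G * A3))
        = ∑ l ∈ E.support,
            Polynomial.C (E.coeff l) * (Polynomial.X ^ (i + l) * (G * A3)) := by
      conv_lhs => rw [Polynomial.as_sum_support_C_mul_X_pow E]
      rw [Finset.sum_mul]
      apply Finset.sum_congr rfl
      intro l _
      rw [pow_add]; ring
    have hexp : BP c (E * (Polynomial.X ^ i * (G * A3)))
        (Polynomial.X ^ (p + 1 + b) * (G * A3))
        = ∑ l ∈ E.support, E.coeff l * eta (i + l) (p + 1 + b) := by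
      rw [hEexp, BP_finset_sum_left]
      apply Finset.sum_congr rfl
      intro l _
      rw [BP_Cmul_left]
    rw [← hexp]
    exact h0
  -- divisibility bootstrap
  have hdvdeta : ∀ n a b : ℕ, (Polynomial.X : Polynomial K) ^ ((p + 1 + a) + (p + 1 + b) + n)
      ∣ eta (p + 1 + a) (p + 1 + b) := by
    intro n
    induction n with
    | zero =>
      intro a b
      rw [← hkey a b, Nat.add_zero]
      exact ((hdvd (p + 1 + a) (p + 1 + b) (by omega) (by omega)).mul_left dd).mul_left dd
    | succ n IH =>
      intro a b
      have h0mem : (0 : ℕ) ∈ E.support := Polynomial.mem_support_iff.mpr hE0ne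
      have hsum := hrec (p + 1 + a) b
      rw [← Finset.sum_erase_add E.support _ h0mem] at hsum
      simp only [Nat.add_zero] at hsum
      have heq : E.coeff 0 * eta (p + 1 + a) (p + 1 + b)
          = - ∑ l ∈ E.support.erase 0, E.coeff l * eta (p + 1 + a + l) (p + 1 + b) := by
        linear_combination hsum
      have hdvdsum : (Polynomial.X : Polynomial K) ^ ((p + 1 + a) + (p + 1 + b) + (n + 1))
          ∣ ∑ l ∈ E.support.erase 0, E.coeff l * eta (p + 1 + a + l) (p + 1 + b) := by
        apply Finset.dvd_sum
        intro l hl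
        have hl0 : l ≠ 0 := Finset.ne_of_mem_erase hl
        have hIH := IH (a + l) b
        rw [show p + 1 + (a + l) = p + 1 + a + l by omega] at hIH
        exact (dvd_trans (pow_dvd_pow _ (by omega)) hIH).mul_left _
      have hfin : (Polynomial.X : Polynomial K) ^ ((p + 1 + a) + (p + 1 + b) + (n + 1))
          ∣ E.coeff 0 * eta (p + 1 + a) (p + 1 + b) := by
        rw [heq]
        exact hdvdsum.neg_right
      exact (Polynomial.prime_X).pow_dvd_of_dvd_mul_left _ hXndvdE0 hfin
  have hetazero : ∀ a b : ℕ, eta (p + 1 + a) (p + 1 + b) = 0 := by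
    intro a b
    by_contra hne
    have hd := hdvdeta ((eta (p + 1 + a) (p + 1 + b)).natDegree + 1) a b
    have hle := Polynomial.natDegree_le_of_dvd hd hne
    rw [Polynomial.natDegree_X_pow] at hle
    omega
  refine ⟨p + 1, by omega, ?_⟩
  intro i j hi hj
  obtain ⟨a, rfl⟩ : ∃ a, i = p + 1 + a := ⟨i - (p + 1), by omega⟩
  obtain ⟨b, rfl⟩ : ∃ b, j = p + 1 + b := ⟨j - (p + 1), by omega⟩
  have h := hkey a b
  rw [hetazero a b] at h
  rcases mul_eq_zero.mp h with h' | h'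
  · exact absurd h' hddne
  · rcases mul_eq_zero.mp h' with h'' | h''
    · exact absurd h'' hddne
    · exact h''

end Engine

section Final

lemma lie_finset_sum {ι : Type*} (u : L) (t : Finset ι) (f : ι → L) :
    ⁅u, ∑ i ∈ t, f i⁆ = ∑ i ∈ t, ⁅u, f i⁆ := by
  classical
  induction t using Finset.induction_on with
  | empty => simp
  | insert _ _ hns ih => rw [Finset.sum_insert hns, Finset.sum_insert hns, lie_add, ih]

lemma finset_sum_lie {ι : Type*} (u : L) (t : Finset ι) (f : ι → L) :
    ⁅∑ i ∈ t, f i, u⁆ = ∑ i ∈ t, ⁅f i, u⁆ := by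
  classical
  induction t using Finset.induction_on with
  | empty => simp
  | insert _ _ hns ih => rw [Finset.sum_insert hns, Finset.sum_insert hns, add_lie, ih]

lemma bracket_zero_of_tail {N : ℕ} (hz : ∀ i j, N ≤ i → N ≤ j → ⁅B i, B j⁆ = 0)
    {x y : L} (hx : x ∈ Sn B N) (hy : y ∈ Sn B N) : ⁅x, y⁆ = 0 := by
  induction hx using Submodule.span_induction with
  | mem v hv =>
    obtain ⟨i, rfl⟩ := hv
    induction hy using Submodule.span_induction with
    | mem w hw =>
      obtain ⟨j, rfl⟩ := hw
      exact hz _ _ (Nat.le_add_right _ _) (Nat.le_add_right _ _)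
    | zero => simp
    | add w w' _ _ hw hw' => rw [lie_add, hw, hw', add_zero]
    | smul t w _ hw => rw [lie_smul, hw, smul_zero]
  | zero => simp
  | add v v' _ _ hv hv' => rw [add_lie, hv, hv', add_zero]
  | smul t v _ hv => rw [smul_lie, hv, smul_zero]

theorem main (B : Module.Basis ℕ K L)
    (ha : ∀ j, 1 ≤ j → ⁅B 0, B j⁆ = B (j + 1))
    (he : ∀ j, 1 ≤ j →
      ⁅B j, B (j + 1)⁆ ∈ Submodule.span K {x : L | ∃ i, 2 * j + 2 ≤ i ∧ x = B i})
    (hsolv : LieAlgebra.IsSolvable L) :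
    ∃ k, 1 ≤ k ∧ ∀ x ∈ lowerCentralSeries K L L (k - 1),
      ∀ y ∈ lowerCentralSeries K L L (k - 1), ⁅x, y⁆ = 0 := by
  classical
  -- find the last nonzero term of the derived series
  obtain ⟨n0, hn0⟩ := LieAlgebra.IsSolvable.solvable K L
  have hex : ∃ n, LieAlgebra.derivedSeries K L n = ⊥ := ⟨n0, hn0⟩
  set n1 : ℕ := Nat.find hex with hn1def
  have hn1 : LieAlgebra.derivedSeries K L n1 = ⊥ := Nat.find_spec hex
  have hn1pos : 1 ≤ n1 := by
    rcases Nat.eq_zero_or_pos n1 with h0 | h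
    · exfalso
      have htop : LieAlgebra.derivedSeries K L 0 = ⊥ := by rw [← h0]; exact hn1
      have hB0 : (B 0 : L) ∈ LieAlgebra.derivedSeries K L 0 := by
        rw [LieAlgebra.derivedSeries_def, LieAlgebra.derivedSeriesOfIdeal_zero]
        trivial
      rw [htop] at hB0
      exact (B.ne_zero 0) ((LieSubmodule.mem_bot _).mp hB0)
    · exact h
  obtain ⟨m, hm⟩ : ∃ m, n1 = m + 1 := ⟨n1 - 1, by omega⟩
  set J : LieIdeal K L := LieAlgebra.derivedSeries K L m with hJdef
  have hJne : J ≠ ⊥ := by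
    intro h
    exact Nat.find_min hex (by omega : m < n1) h
  have hJJ : ∀ u ∈ J, ∀ v ∈ J, ⁅u, v⁆ = 0 := by
    intro u hu v hv
    have hmem : ⁅u, v⁆ ∈ LieAlgebra.derivedSeries K L (m + 1) := by
      rw [LieAlgebra.derivedSeries_def, LieAlgebra.derivedSeriesOfIdeal_succ]
      exact LieSubmodule.lie_mem_lie hu hv
    rw [← hm, hn1] at hmem
    exact (LieSubmodule.mem_bot _).mp hmem
  -- a nonzero element of J
  obtain ⟨x0, hx0J, hx0ne⟩ : ∃ x0, x0 ∈ J ∧ x0 ≠ 0 := by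
    by_contra h
    push_neg at h
    exact hJne (LieSubmodule.eq_bot_iff J |>.mpr fun m hm => h m hm)
  -- purify: get a nonzero element of J with no `a`-component
  obtain ⟨x, hxJ, hxne, hxrep0⟩ : ∃ x, x ∈ J ∧ x ≠ 0 ∧ B.repr x 0 = 0 := by
    by_cases h0 : B.repr x0 0 = 0
    · exact ⟨x0, hx0J, hx0ne, h0⟩
    · set α : K := B.repr x0 0 with hαdef
      have hyJ : ⁅x0, B 1⁆ ∈ J := by
        rw [← lie_skew]
        exact Submodule.neg_mem _ (J.lie_mem hx0J)
      have hwmem : x0 - α • B 0 ∈ Sn B 1 := by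
        apply mem_I_of_repr_zero
        rw [map_sub, map_smul, Module.Basis.repr_self]
        simp [hαdef]
      have hy : ⁅x0, B 1⁆ = α • B 2 + ⁅x0 - α • B 0, B 1⁆ := by
        have hx0eq : x0 = α • B 0 + (x0 - α • B 0) := by abel
        conv_lhs => rw [hx0eq]
        rw [add_lie, smul_lie, ha 1 (le_refl 1)]
      have hwS' : ∀ w ∈ Sn B 1, ⁅w, B 1⁆ ∈ Sn B 3 := by
        intro w hw
        induction hw using Submodule.span_induction with
        | mem v hv =>
          obtain ⟨k, rfl⟩ := hv
          rw [← lie_skew]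
          exact Submodule.neg_mem _ (Sn_mono B (by omega) (lie_BB_mem ha he (by omega) (by omega)))
        | zero => simp
        | add v v' _ _ hv hv' => rw [add_lie]; exact Submodule.add_mem _ hv hv'
        | smul t v _ hv => rw [smul_lie]; exact Submodule.smul_mem _ t hv
      have hwS : ⁅x0 - α • B 0, B 1⁆ ∈ Sn B 3 := hwS' _ hwmem
      have hrep2 : B.repr ⁅x0, B 1⁆ 2 = α := by
        rw [hy, map_add, Finsupp.add_apply, map_smul, Module.Basis.repr_self,
          repr_eq_zero_of_mem_Sn B (by omega) hwS]
        simp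
      have hyne : ⁅x0, B 1⁆ ≠ 0 := by
        intro h
        rw [h] at hrep2
        simp at hrep2
        exact h0 hrep2.symm
      have hyrep0 : B.repr ⁅x0, B 1⁆ 0 = 0 := by
        rw [hy, map_add, Finsupp.add_apply, map_smul, Module.Basis.repr_self,
          repr_eq_zero_of_mem_Sn B (by omega) hwS]
        simp
      exact ⟨⁅x0, B 1⁆, hyJ, hyne, hyrep0⟩
  -- shifted copies of x
  set xr : ℕ → L := fun r => (fun w => ⁅B 0, w⁆)^[r] x with hxrdef
  have hxrJ : ∀ r, xr r ∈ J := by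
    intro r
    induction r with
    | zero => simpa [hxrdef] using hxJ
    | succ r IH =>
      have : xr (r + 1) = ⁅B 0, xr r⁆ := by
        rw [hxrdef]
        exact Function.iterate_succ_apply' _ _ _
      rw [this]
      exact J.lie_mem IH
  have hsupp1 : ∀ s ∈ (B.repr x).support, 1 ≤ s := by
    intro s hs
    rcases Nat.eq_zero_or_pos s with rfl | h
    · exact absurd hxrep0 (Finsupp.mem_support_iff.mp hs)
    · exact h
  have hxr_formula : ∀ r, xr r = ∑ s ∈ (B.repr x).support, (B.repr x) s • B (s + r) := by
    intro r
    induction r with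
    | zero =>
      rw [hxrdef]
      simp only [Function.iterate_zero, id_eq]
      conv_lhs => rw [← B.linearCombination_repr x, Finsupp.linearCombination_apply, Finsupp.sum]
      apply Finset.sum_congr rfl
      intro s _
      rw [Nat.add_zero]
    | succ r IH =>
      have hstep : xr (r + 1) = ⁅B 0, xr r⁆ := by
        rw [hxrdef]
        exact Function.iterate_succ_apply' _ _ _
      rw [hstep, IH, lie_finset_sum]
      apply Finset.sum_congr rfl
      intro s hs
      rw [lie_smul, ha (s + r) (by have := hsupp1 s hs; omega), Nat.add_assoc]
  -- scalar structure constants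
  set c : ℕ → ℕ → Polynomial K := fun i j => piL B ⁅B i, B j⁆ with hcdef
  have hc3 : ∀ i j, 1 ≤ i → 1 ≤ j → c (i + 1) j + c i (j + 1) = Polynomial.X * c i j := by
    intro i j hi hj
    have hlie : ⁅B 0, ⁅B i, B j⁆⁆ = ⁅B (i + 1), B j⁆ + ⁅B i, B (j + 1)⁆ := by
      have h := leibniz_lie (B 0) (B i) (B j)
      rwa [ha i hi, ha j hj] at h
    have hmem : ⁅B i, B j⁆ ∈ Sn B 1 := Sn_mono B (by omega) (lie_BB_mem ha he hi hj)
    have h2 := piL_lie_B0 ha hmem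
    rw [hlie, map_add] at h2
    exact h2
  have hc4 : ∀ i j, c i j = - c j i := by
    intro i j
    rw [hcdef]
    simp only
    rw [← lie_skew (B j) (B i), map_neg, neg_neg]
  have hdvd : ∀ i j, 1 ≤ i → 1 ≤ j → (Polynomial.X : Polynomial K) ^ (i + j) ∣ c i j := by
    intro i j hi hj
    exact piL_dvd_of_mem_Sn (lie_BB_mem ha he hi hj)
  -- the polynomial incarnation of x
  set xc : ℕ →₀ K := B.repr x with hxcdef
  set xpoly : Polynomial (Polynomial K) :=
    xc.sum fun s a => Polynomial.C (Polynomial.C a) * Polynomial.X ^ s with hxpdef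
  have hxpolyexp : ∀ r : ℕ, Polynomial.X ^ r * xpoly
      = ∑ s ∈ xc.support, Polynomial.C (Polynomial.C (xc s)) * Polynomial.X ^ (s + r) := by
    intro r
    rw [hxpdef, Finsupp.sum, Finset.mul_sum]
    apply Finset.sum_congr rfl
    intro s _
    rw [pow_add]; ring
  have hcomm : ∀ r r' : ℕ, BP c (Polynomial.X ^ r * xpoly) (Polynomial.X ^ r' * xpoly) = 0 := by
    intro r r'
    have hz : ⁅xr r, xr r'⁆ = 0 := hJJ _ (hxrJ r) _ (hxrJ r')
    have hL : BP c (Polynomial.X ^ r * xpoly) (Polynomial.X ^ r' * xpoly)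
        = ∑ s ∈ xc.support, ∑ t ∈ xc.support,
            Polynomial.C (xc s) * (Polynomial.C (xc t) * c (s + r) (t + r')) := by
      rw [hxpolyexp r, hxpolyexp r', BP_finset_sum_left]
      apply Finset.sum_congr rfl
      intro s _
      rw [BP_finset_sum_right]
      apply Finset.sum_congr rfl
      intro t _
      rw [BP_CXpow]
      ring
    have hR : piL B ⁅xr r, xr r'⁆
        = ∑ s ∈ xc.support, ∑ t ∈ xc.support,
            Polynomial.C (xc s) * (Polynomial.C (xc t) * c (s + r) (t + r')) := by
      rw [hxr_formula r, hxr_formula r', finset_sum_lie, map_sum]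
      apply Finset.sum_congr rfl
      intro s _
      rw [smul_lie, lie_finset_sum, map_smul, map_sum, Polynomial.smul_eq_C_mul, Finset.mul_sum]
      apply Finset.sum_congr rfl
      intro t _
      rw [lie_smul, map_smul, Polynomial.smul_eq_C_mul]
    rw [hL, ← hR, hz, map_zero]
  have hxcne : xc ≠ 0 := by
    intro h
    apply hxne
    have : B.repr x = 0 := h
    simpa using (B.repr.map_eq_zero_iff).mp this
  obtain ⟨N, hN1, hNz⟩ := engine c hc3 hc4 hdvd xc hxrep0 hxcne xpoly hxpdef hcomm
  have hBz : ∀ i j, N + 1 ≤ i → N + 1 ≤ j → ⁅B i, B j⁆ = 0 := by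
    intro i j hi hj
    exact (piL_eq_zero_iff B).mp (hNz i j (by omega) (by omega))
  refine ⟨N + 1, by omega, ?_⟩
  intro u hu v hv
  have hNsub : N + 1 - 1 = N := by omega
  rw [hNsub] at hu hv
  obtain ⟨N', rfl⟩ : ∃ N', N = N' + 1 := ⟨N - 1, by omega⟩
  have hu' : u ∈ Sn B (N' + 2) := lcs_le_Sn ha he N' u hu
  have hv' : v ∈ Sn B (N' + 2) := lcs_le_Sn ha he N' v hv
  exact bracket_zero_of_tail (fun i j hi hj => hBz i j (by omega) (by omega)) hu' hv'

end Final

end Filiform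

end FiliformDevelopment

/-- If `L` is a solvable infinite filiform Lie algebra (basis `B` with
`B 0 = a`, `B i = eᵢ`, `[a, eⱼ] = e_{j+1}`,
`[eⱼ, e_{j+1}] ∈ span {eᵢ : i ≥ 2j+2}`), then `L^k` is abelian for some
`k ≥ 1`.  (Mathlib's lower central series is numbered so that `L^k` is
`lowerCentralSeries K L L (k - 1)`.) -/
theorem filiform_solvable_lcs_abelian (K : Type*) [Field K] [CharZero K]
    (L : Type*) [LieRing L] [LieAlgebra K L] (B : Module.Basis ℕ K L)
    (ha : ∀ j, 1 ≤ j → ⁅B 0, B j⁆ = B (j + 1))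
    (he : ∀ j, 1 ≤ j →
      ⁅B j, B (j + 1)⁆ ∈ Submodule.span K {x : L | ∃ i, 2 * j + 2 ≤ i ∧ x = B i})
    (hsolv : LieAlgebra.IsSolvable L) :
    ∃ k, 1 ≤ k ∧ ∀ x ∈ lowerCentralSeries K L L (k - 1),
      ∀ y ∈ lowerCentralSeries K L L (k - 1), ⁅x, y⁆ = 0 :=
  Filiform.main B ha he hsolv
end

section
/- Let L be an infinite filiform Lie algebra and suppose for n ≥ 2 that L^{n+1} is abelian. Writing [eₙ, e_{n+1}] = Σ_{i≥0} μᵢ e_{2n+2+i}, one has [eₙ, eⱼ] = Σ_{i≥0} μᵢ e_{n+j+1+i} for all j ≥ n+1. -/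
/-- Let `L` be an infinite filiform Lie algebra (basis `B` with `B 0 = a`,
`B i = eᵢ`, `[a, eᵢ] = e_{i+1}`, `[eᵢ, eⱼ] ∈ span {e_k : k ≥ i+j+1}`), with
`[eᵢ, eⱼ] = 0` for `i, j ≥ n+1` and `n ≥ 2`.  If
`[eₙ, e_{n+1}] = Σ_{i ≥ 0} μᵢ e_{2n+2+i}`, then
`[eₙ, eⱼ] = Σ_{i ≥ 0} μᵢ e_{n+j+1+i}` for all `j ≥ n+1`. -/
theorem filiform_mu_formula (K : Type*) [Field K] [CharZero K]
    (L : Type*) [LieRing L] [LieAlgebra K L] (B : Module.Basis ℕ K L)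
    (ha : ∀ i, 1 ≤ i → ⁅B 0, B i⁆ = B (i + 1))
    (hfil : ∀ i, 1 ≤ i → ∀ j, 1 ≤ j →
      ⁅B i, B j⁆ ∈ Submodule.span K {x : L | ∃ t, i + j + 1 ≤ t ∧ x = B t})
    (n : ℕ) (hn : 2 ≤ n)
    (hab : ∀ i, n + 1 ≤ i → ∀ j, n + 1 ≤ j → ⁅B i, B j⁆ = 0)
    (mu : ℕ →₀ K)
    (hmu : ⁅B n, B (n + 1)⁆ = mu.sum fun i c => c • B (2 * n + 2 + i)) :
    ∀ j, n + 1 ≤ j → ⁅B n, B j⁆ = mu.sum fun i c => c • B (n + j + 1 + i) := by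
  intro j hj
  induction j, hj using Nat.le_induction with
  | base =>
    rw [hmu]
    apply Finsupp.sum_congr
    intro i _
    have : n + (n + 1) + 1 + i = 2 * n + 2 + i := by omega
    rw [this]
  | succ j hj ih =>
    have hnj : (1:ℕ) ≤ j := by omega
    have hBj : B (j + 1) = ⁅B 0, B j⁆ := (ha j hnj).symm
    rw [hBj, leibniz_lie]
    have h1 : ⁅B n, B 0⁆ = -B (n + 1) := by
      rw [← lie_skew, ha n (by omega)]
    rw [h1, neg_lie, hab (n+1) le_rfl j hj, neg_zero, zero_add, ih]
    rw [Finsupp.sum, Finsupp.sum, show (⁅B 0, ∑ a ∈ mu.support, mu a • B (n + j + 1 + a)⁆ : L) = LieAlgebra.ad K L (B 0) (∑ a ∈ mu.support, mu a • B (n + j + 1 + a)) from rfl, map_sum]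
    apply Finset.sum_congr rfl
    intro i _
    rw [map_smul, LieAlgebra.ad_apply, ha _ (by omega)]
    have : n + j + 1 + i + 1 = n + (j + 1) + 1 + i := by omega
    rw [this]
end

section
/- Let L be an infinite filiform Lie algebra with L^{n+1} abelian for some n ≥ 2, and write [e_{n-1}, eₙ] = Σ_{i≥0} λᵢ e_{2n+i} and [eₙ, e_{n+1}] = Σ_{i≥0} μᵢ e_{2n+2+i}. Then for all j ≥ 0, [e_{n-1}, e_{n+j}] = Σ_{i≥0} (λᵢ − (j−1)μᵢ) e_{2n+j+i} (with the convention that the j = 0 case reads [e_{n-1}, eₙ] = Σ λᵢ e_{2n+i}). -/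
/-- Let `L` be an infinite filiform Lie algebra (basis `B` with `B 0 = a`,
`B i = eᵢ`, `[a, eᵢ] = e_{i+1}`, `[eᵢ, eⱼ] ∈ span {e_k : k ≥ i+j+1}`), with
`[eᵢ, eⱼ] = 0` for `i, j ≥ n+1` and `n ≥ 2`.  Writing
`[e_{n-1}, eₙ] = Σ_{i ≥ 0} λᵢ e_{2n+i}` and
`[eₙ, e_{n+1}] = Σ_{i ≥ 0} μᵢ e_{2n+2+i}`, one has, for all `j ≥ 0`,
`[e_{n-1}, e_{n+j}] = Σ_{i ≥ 0} (λᵢ − (j−1)μᵢ) e_{2n+j+i}` (with the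
convention, realized by truncated subtraction `j - 1` in `ℕ`, that the `j = 0`
case reads `[e_{n-1}, eₙ] = Σ λᵢ e_{2n+i}`). -/
theorem filiform_lambda_mu_formula (K : Type*) [Field K] [CharZero K]
    (L : Type*) [LieRing L] [LieAlgebra K L] (B : Module.Basis ℕ K L)
    (ha : ∀ i, 1 ≤ i → ⁅B 0, B i⁆ = B (i + 1))
    (hfil : ∀ i, 1 ≤ i → ∀ j, 1 ≤ j →
      ⁅B i, B j⁆ ∈ Submodule.span K {x : L | ∃ t, i + j + 1 ≤ t ∧ x = B t})
    (n : ℕ) (hn : 2 ≤ n)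
    (hab : ∀ i, n + 1 ≤ i → ∀ j, n + 1 ≤ j → ⁅B i, B j⁆ = 0)
    (lam mu : ℕ →₀ K)
    (hlam : ⁅B (n - 1), B n⁆ = lam.sum fun i c => c • B (2 * n + i))
    (hmu : ⁅B n, B (n + 1)⁆ = mu.sum fun i c => c • B (2 * n + 2 + i)) :
    ∀ j : ℕ,
      ⁅B (n - 1), B (n + j)⁆ =
        (lam.sum fun i c => c • B (2 * n + j + i)) -
          ((j - 1 : ℕ) : K) • (mu.sum fun i c => c • B (2 * n + j + i)) := by
  -- reindexing helper
  have hcongr : ∀ (f : ℕ →₀ K) (g h : ℕ → ℕ), (∀ i, g i = h i) →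
      (f.sum fun i c => c • B (g i)) = f.sum fun i c => c • B (h i) := by
    intro f g h hg
    apply Finsupp.sum_congr
    intro i _
    rw [hg]
  -- shifting by ad (B 0)
  have ha0 : ∀ (f : ℕ →₀ K) (k : ℕ), 1 ≤ k →
      ⁅B 0, f.sum fun i c => c • B (k + i)⁆ = f.sum fun i c => c • B (k + i + 1) := by
    intro f k hk
    rw [show (⁅B 0, f.sum fun i c => c • B (k + i)⁆ : L)
        = (LieAlgebra.ad K L (B 0)) (f.sum fun i c => c • B (k + i)) from rfl,
      map_finsuppSum]
    apply Finsupp.sum_congr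
    intro i _
    rw [map_smul, LieAlgebra.ad_apply, ha (k + i) (by omega)]
  have hBn0 : (⁅B n, B 0⁆ : L) = -B (n + 1) := by
    rw [← lie_skew, ha n (by omega)]
  have hske : (⁅B (n - 1), B 0⁆ : L) = -B n := by
    rw [← lie_skew, ha (n - 1) (by omega), Nat.sub_add_cancel (by omega)]
  -- [eₙ, e_{n+j}] for j ≥ 1
  have hEn : ∀ j : ℕ, ⁅B n, B (n + (j + 1))⁆
      = mu.sum fun i c => c • B (2 * n + (j + 1) + 1 + i) := by
    intro j
    induction j with
    | zero =>
      rw [hmu]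
    | succ j ih =>
      have h1 : B (n + (j + 2)) = ⁅B 0, B (n + (j + 1))⁆ := (ha (n + (j + 1)) (by omega)).symm
      rw [h1, leibniz_lie, hBn0, neg_lie,
        hab (n + 1) le_rfl (n + (j + 1)) (by omega), neg_zero, zero_add, ih,
        ha0 mu (2 * n + (j + 1) + 1) (by omega)]
      exact hcongr _ _ _ (fun i => by omega)
  intro j
  induction j with
  | zero =>
    simpa using hlam
  | succ j ih =>
    have h1 : B (n + (j + 1)) = ⁅B 0, B (n + j)⁆ := (ha (n + j) (by omega)).symm
    rw [h1, leibniz_lie, hske, neg_lie, ih, lie_sub, lie_smul,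
      ha0 lam (2 * n + j) (by omega), ha0 mu (2 * n + j) (by omega),
      hcongr lam (fun i => 2 * n + j + i + 1) (fun i => 2 * n + (j + 1) + i) (fun i => by beta_reduce; omega),
      hcongr mu (fun i => 2 * n + j + i + 1) (fun i => 2 * n + (j + 1) + i) (fun i => by beta_reduce; omega)]
    rcases j with _ | j'
    · have h0 : (⁅B n, B (n + 0)⁆ : L) = 0 := by
        rw [Nat.add_zero]; exact lie_self _
      rw [h0]
      simp
    · rw [hEn j',
        hcongr mu (fun i => 2 * n + (j' + 1) + 1 + i) (fun i => 2 * n + (j' + 1 + 1) + i)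
          (fun i => by beta_reduce; omega)]
      have hc1 : ((j' + 1 - 1 : ℕ) : K) = (j' : K) := by norm_num
      have hc2 : ((j' + 1 + 1 - 1 : ℕ) : K) = (j' : K) + 1 := by push_cast [Nat.add_sub_cancel]; ring
      rw [hc1, hc2]
      module
end

section
/- Let L be an infinite filiform Lie algebra over a field of characteristic zero such that L^{n+1} is abelian for some n ≥ 2. Then L^n is abelian. -/
/-- Let `L` be an infinite filiform Lie algebra over a field of characteristic
zero (basis `B` with `B 0 = a`, `B i = eᵢ`, `[a, eᵢ] = e_{i+1}`,
`[eᵢ, eⱼ] ∈ span {e_k : k ≥ i+j+1}`; here `L^m = span {eⱼ : j ≥ m}` for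
`m ≥ 2`).  If `L^{n+1}` is abelian for some `n ≥ 2`, then `L^n` is abelian. -/
theorem filiform_abelian_step (K : Type*) [Field K] [CharZero K]
    (L : Type*) [LieRing L] [LieAlgebra K L] (B : Module.Basis ℕ K L)
    (ha : ∀ i, 1 ≤ i → ⁅B 0, B i⁆ = B (i + 1))
    (hfil : ∀ i, 1 ≤ i → ∀ j, 1 ≤ j →
      ⁅B i, B j⁆ ∈ Submodule.span K {x : L | ∃ t, i + j + 1 ≤ t ∧ x = B t})
    (n : ℕ) (hn : 2 ≤ n)
    (hab : ∀ x ∈ Submodule.span K {x : L | ∃ j, n + 1 ≤ j ∧ x = B j},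
           ∀ y ∈ Submodule.span K {x : L | ∃ j, n + 1 ≤ j ∧ x = B j},
           ⁅x, y⁆ = 0) :
    ∀ x ∈ Submodule.span K {x : L | ∃ j, n ≤ j ∧ x = B j},
    ∀ y ∈ Submodule.span K {x : L | ∃ j, n ≤ j ∧ x = B j},
    ⁅x, y⁆ = 0 := by
  classical
  set S : ℕ → Submodule K L :=
    fun m => Submodule.span K {x : L | ∃ t, m ≤ t ∧ x = B t} with hSdef
  have Smono : ∀ {m m' : ℕ}, m' ≤ m → S m ≤ S m' := by
    intro m m' h
    exact Submodule.span_mono (by rintro _ ⟨t, ht, rfl⟩; exact ⟨t, h.trans ht, rfl⟩)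
  have memS : ∀ m t : ℕ, m ≤ t → B t ∈ S m := fun m t h => Submodule.subset_span ⟨t, h, rfl⟩
  have hn1 : 1 ≤ n := by omega
  have hzero : ∀ j k : ℕ, n + 1 ≤ j → n + 1 ≤ k → ⁅B j, B k⁆ = 0 := fun j k hj hk =>
    hab _ (memS (n+1) j hj) _ (memS (n+1) k hk)
  -- coefficients of members of `S m` vanish below `m`
  have reprS : ∀ (m : ℕ) (x : L), x ∈ S m → ∀ t, t < m → B.repr x t = 0 := by
    intro m x hx
    induction hx using Submodule.span_induction with
    | mem x hxm =>
      intro t ht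
      obtain ⟨u, hu, rfl⟩ := hxm
      rw [B.repr_self]
      exact Finsupp.single_eq_of_ne (by omega)
    | zero => intro t ht; simp
    | add x y hx hy ihx ihy =>
      intro t ht
      rw [map_add, Finsupp.add_apply, ihx t ht, ihy t ht, add_zero]
    | smul a x hx ih =>
      intro t ht
      rw [map_smul, Finsupp.smul_apply, ih t ht, smul_zero]
  set T : Module.End K L := LieAlgebra.ad K L (B 0) with hTdef
  have Tapply : ∀ x : L, T x = ⁅B 0, x⁆ := fun _ => rfl
  have TS1 : ∀ x, x ∈ S 1 → T x ∈ S 1 := by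
    intro x hx
    induction hx using Submodule.span_induction with
    | mem x hxm =>
      obtain ⟨u, hu, rfl⟩ := hxm
      rw [Tapply, ha u hu]
      exact memS _ _ (by omega)
    | zero => simp
    | add x y hx hy ihx ihy => rw [map_add]; exact add_mem ihx ihy
    | smul a x hx ih => rw [map_smul]; exact Submodule.smul_mem _ _ ih
  have Tcoe : ∀ x, x ∈ S 1 → ∀ t, B.repr (T x) t = if 1 ≤ t then B.repr x (t - 1) else 0 := by
    intro x hx
    induction hx using Submodule.span_induction with
    | mem x hxm =>
      obtain ⟨u, hu, rfl⟩ := hxm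
      intro t
      rw [Tapply, ha u hu, B.repr_self, B.repr_self]
      rcases Nat.lt_or_ge t 1 with h | h
      · rw [if_neg (by omega), Finsupp.single_eq_of_ne (by omega)]
      · rw [if_pos h, Finsupp.single_apply, Finsupp.single_apply]
        split_ifs <;> first | rfl | (exfalso; omega)
    | zero => intro t; simp
    | add x y hx hy ihx ihy =>
      intro t
      simp only [map_add, Finsupp.add_apply, ihx t, ihy t]
      split_ifs <;> simp
    | smul a x hx ih =>
      intro t
      simp only [map_smul, Finsupp.smul_apply, ih t]
      split_ifs <;> simp
  have TpowS1 : ∀ (k : ℕ) (x : L), x ∈ S 1 → (T ^ k) x ∈ S 1 := by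
    intro k
    induction k with
    | zero => intro x hx; simpa using hx
    | succ k ih =>
      intro x hx
      rw [pow_succ, Module.End.mul_apply]
      exact ih _ (TS1 x hx)
  have Tpowcoe : ∀ (k : ℕ) (x : L), x ∈ S 1 →
      ∀ t, B.repr ((T ^ k) x) t = if k ≤ t then B.repr x (t - k) else 0 := by
    intro k
    induction k with
    | zero => intro x hx t; simp
    | succ k ih =>
      intro x hx t
      rw [pow_succ, Module.End.mul_apply, ih (T x) (TS1 x hx) t]
      by_cases hk : k ≤ t
      · rw [if_pos hk, Tcoe x hx (t - k)]
        by_cases h1 : k + 1 ≤ t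
        · rw [if_pos (show 1 ≤ t - k by omega), if_pos h1]
          rfl
        · rw [if_neg (show ¬ 1 ≤ t - k by omega), if_neg h1]
      · rw [if_neg hk, if_neg (by omega)]
  have Tpow_succ : ∀ (k : ℕ) (x : L), T ((T ^ k) x) = (T ^ (k+1)) x := by
    intro k x
    rw [pow_succ', Module.End.mul_apply]
  set c : L := ⁅B n, B (n+1)⁆ with hcdef
  set d : L := ⁅B (n-1), B (n+1)⁆ with hddef
  have hcS : c ∈ S (2*n + 2) := Smono (by omega) (hfil n hn1 (n+1) (by omega))
  have hdS : d ∈ S (2*n + 1) := Smono (by omega) (hfil (n-1) (by omega) (n+1) (by omega))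
  have hcS1 : c ∈ S 1 := Smono (by omega) hcS
  have hdS1 : d ∈ S 1 := Smono (by omega) hdS
  have Cform : ∀ k : ℕ, ⁅B n, B (n + 1 + k)⁆ = (T ^ k) c := by
    intro k
    induction k with
    | zero => simp [hcdef]
    | succ k ih =>
      have h := leibniz_lie (B 0) (B n) (B (n + 1 + k))
      rw [ha n hn1, ha (n + 1 + k) (by omega), hzero (n + 1) (n + 1 + k) le_rfl (by omega),
        zero_add, ih, ← Tapply] at h
      rw [show n + 1 + (k + 1) = n + 1 + k + 1 from rfl] at *
      rw [← h, pow_succ', Module.End.mul_apply]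
  have hd0 : ⁅B (n-1), B (n+2)⁆ = T d - c := by
    have h := leibniz_lie (B 0) (B (n-1)) (B (n+1))
    rw [ha (n-1) (by omega), ha (n+1) (by omega), show n - 1 + 1 = n from by omega,
      ← hcdef, ← hddef, ← Tapply] at h
    rw [show n + 1 + 1 = n + 2 from rfl] at h
    rw [h, add_sub_cancel_left]
  have Dform : ∀ k : ℕ, ⁅B (n-1), B (n+2+k)⁆ = (T ^ (k+1)) d - ((k+1 : ℕ) : K) • (T ^ k) c := by
    intro k
    induction k with
    | zero => simpa using hd0
    | succ k ih =>
      have h := leibniz_lie (B 0) (B (n-1)) (B (n+2+k))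
      rw [ha (n-1) (by omega), ha (n+2+k) (by omega), show n - 1 + 1 = n from by omega] at h
      have hC : ⁅B n, B (n+2+k)⁆ = (T ^ (k+1)) c := by
        have h' := Cform (k+1)
        rw [show n + 1 + (k+1) = n + 2 + k from by omega] at h'
        exact h'
      rw [ih, hC, ← Tapply] at h
      rw [map_sub, map_smul] at h
      rw [Tpow_succ (k+1) d, Tpow_succ k c] at h
      have h2 : ⁅B (n-1), B (n+2+k+1)⁆
          = (T ^ (k+1+1)) d - ((k+1 : ℕ) : K) • (T ^ (k+1)) c - (T ^ (k+1)) c := by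
        rw [h]; abel
      show ⁅B (n-1), B (n+2+k+1)⁆ = (T ^ (k+1+1)) d - ((k+2 : ℕ) : K) • (T ^ (k+1)) c
      rw [h2]
      have hcast : ((k+2 : ℕ) : K) = ((k+1 : ℕ) : K) + 1 := by push_cast; ring
      rw [hcast, add_smul, one_smul]
      abel
  have CformT : ∀ s : ℕ, n + 1 ≤ s → ⁅B n, B s⁆ = (T ^ (s - (n+1))) c := by
    intro s hs
    obtain ⟨k, rfl⟩ : ∃ k, s = n + 1 + k := ⟨s - (n+1), by omega⟩
    rw [show n + 1 + k - (n+1) = k from by omega]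
    exact Cform k
  have DformT : ∀ s : ℕ, n + 2 ≤ s →
      ⁅B (n-1), B s⁆ = (T ^ (s - (n+1))) d - ((s - (n+1) : ℕ) : K) • (T ^ (s - (n+2))) c := by
    intro s hs
    obtain ⟨k, rfl⟩ : ∃ k, s = n + 2 + k := ⟨s - (n+2), by omega⟩
    rw [show n + 2 + k - (n+1) = k + 1 from by omega, show n + 2 + k - (n+2) = k from by omega]
    exact Dform k
  -- the key step : c = 0
  have hc0 : c = 0 := by
    by_contra hc
    set γ : ℕ →₀ K := B.repr c with hγdef
    set δ : ℕ →₀ K := B.repr d with hδdef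
    have hγne : γ.support.Nonempty := by
      rw [Finsupp.support_nonempty_iff]
      intro h
      rw [hγdef] at h
      exact hc ((LinearEquiv.map_eq_zero_iff B.repr).mp h)
    set m := γ.support.min' hγne with hmdef
    have hmmem : m ∈ γ.support := γ.support.min'_mem hγne
    have hγm : γ m ≠ 0 := Finsupp.mem_support_iff.mp hmmem
    have hsupp_ge : ∀ s ∈ γ.support, m ≤ s := fun s hs => γ.support.min'_le s hs
    have hlow : ∀ s, s < m → γ s = 0 := by
      intro s hs
      by_contra h
      exact absurd (hsupp_ge s (Finsupp.mem_support_iff.mpr h)) (by omega)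
    have hm2 : 2*n + 2 ≤ m := by
      by_contra h
      exact hγm (reprS _ c hcS m (by omega))
    have hδsupp : ∀ u ∈ δ.support, 2*n + 1 ≤ u := by
      intro u hu
      by_contra h
      exact Finsupp.mem_support_iff.mp hu (reprS _ d hdS u (by omega))
    set N := 2*m - n - 1 with hNdef
    -- Jacobi identity for (B (n-1), B n, B (n+2))
    have star : ⁅B (n-1), ⁅B n, B (n+2)⁆⁆ = ⁅B n, ⁅B (n-1), B (n+2)⁆⁆ := by
      have h := leibniz_lie (B (n-1)) (B n) (B (n+2))
      have hz : ⁅(⁅B (n-1), B n⁆ : L), B (n+2)⁆ = 0 :=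
        hab _ (Smono (by omega) (hfil (n-1) (by omega) n hn1)) _ (memS (n+1) (n+2) (by omega))
      rw [hz, zero_add] at h
      exact h
    have hP : ⁅B n, B (n+2)⁆ = T c := by
      have h := Cform 1
      rwa [show n + 1 + 1 = n + 2 from rfl, pow_one] at h
    have star2 : ⁅B (n-1), T c⁆ = ⁅B n, T d⁆ - ⁅B n, c⁆ := by
      rw [hP, hd0, lie_sub] at star
      exact star
    -- expansions as sums over supports
    have hc_expand : c = ∑ s ∈ γ.support, γ s • B s := by
      conv_lhs => rw [← B.linearCombination_repr c]
      rw [Finsupp.linearCombination_apply, Finsupp.sum, ← hγdef]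
    have hd_expand : d = ∑ u ∈ δ.support, δ u • B u := by
      conv_lhs => rw [← B.linearCombination_repr d]
      rw [Finsupp.linearCombination_apply, Finsupp.sum, ← hδdef]
    have hTc_expand : T c = ∑ s ∈ γ.support, γ s • B (s+1) := by
      conv_lhs => rw [hc_expand]
      rw [map_sum]
      refine Finset.sum_congr rfl fun s hs => ?_
      rw [map_smul, Tapply, ha s (by have := hsupp_ge s hs; omega)]
    have hTd_expand : T d = ∑ u ∈ δ.support, δ u • B (u+1) := by
      conv_lhs => rw [hd_expand]
      rw [map_sum]
      refine Finset.sum_congr rfl fun u hu => ?_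
      rw [map_smul, Tapply, ha u (by have := hδsupp u hu; omega)]
    -- coordinate extraction
    have e1 : (B.coord N) ⁅B (n-1), T c⁆
        = ∑ s ∈ γ.support, γ s * ((B.coord N) ⁅B (n-1), B (s+1)⁆) := by
      rw [hTc_expand, ← LieAlgebra.ad_apply (R := K), map_sum, map_sum]
      refine Finset.sum_congr rfl fun s hs => ?_
      rw [map_smul, map_smul, smul_eq_mul, LieAlgebra.ad_apply]
    have e2 : (B.coord N) ⁅B n, T d⁆
        = ∑ u ∈ δ.support, δ u * ((B.coord N) ⁅B n, B (u+1)⁆) := by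
      rw [hTd_expand, ← LieAlgebra.ad_apply (R := K), map_sum, map_sum]
      refine Finset.sum_congr rfl fun u hu => ?_
      rw [map_smul, map_smul, smul_eq_mul, LieAlgebra.ad_apply]
    have e3 : (B.coord N) ⁅B n, c⁆
        = ∑ s ∈ γ.support, γ s * ((B.coord N) ⁅B n, B s⁆) := by
      conv_lhs => rw [hc_expand]
      rw [← LieAlgebra.ad_apply (R := K), map_sum, map_sum]
      refine Finset.sum_congr rfl fun s hs => ?_
      rw [map_smul, map_smul, smul_eq_mul, LieAlgebra.ad_apply]
    -- per-term coefficient values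
    have key1 : ∀ s ∈ γ.support, (B.coord N) ⁅B (n-1), B (s+1)⁆
        = (if s < 2*m then δ (2*m - 1 - s) else 0)
          - ((s - n : ℕ) : K) * (if s ≤ 2*m then γ (2*m - s) else 0) := by
      intro s hs
      have hsm : m ≤ s := hsupp_ge s hs
      have hs2 : 2*n + 2 ≤ s := by omega
      rw [DformT (s+1) (by omega), show s + 1 - (n+1) = s - n from by omega,
        show s + 1 - (n+2) = s - n - 1 from by omega]
      rw [map_sub, map_smul, smul_eq_mul, Module.Basis.coord_apply, Module.Basis.coord_apply,
        Tpowcoe _ d hdS1, Tpowcoe _ c hcS1, ← hγdef, ← hδdef]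
      congr 1
      · by_cases h : s < 2*m
        · rw [if_pos (by omega), if_pos h]
          congr 1
          omega
        · rw [if_neg (by omega), if_neg h]
      · congr 1
        by_cases h : s ≤ 2*m
        · rw [if_pos (by omega), if_pos h]
          congr 1
          omega
        · rw [if_neg (by omega), if_neg h]
    have key2 : ∀ u ∈ δ.support, (B.coord N) ⁅B n, B (u+1)⁆
        = (if u < 2*m then γ (2*m - 1 - u) else 0) := by
      intro u hu
      have hu2 : 2*n + 1 ≤ u := hδsupp u hu
      rw [CformT (u+1) (by omega), show u + 1 - (n+1) = u - n from by omega,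
        Module.Basis.coord_apply, Tpowcoe _ c hcS1, ← hγdef]
      by_cases h : u < 2*m
      · rw [if_pos (by omega), if_pos h]
        congr 1
        omega
      · rw [if_neg (by omega), if_neg h]
    have key3 : ∀ s ∈ γ.support, (B.coord N) ⁅B n, B s⁆
        = (if s ≤ 2*m then γ (2*m - s) else 0) := by
      intro s hs
      have hsm : m ≤ s := hsupp_ge s hs
      have hs2 : 2*n + 2 ≤ s := by omega
      rw [CformT s (by omega), Module.Basis.coord_apply, Tpowcoe _ c hcS1, ← hγdef]
      by_cases h : s ≤ 2*m
      · rw [if_pos (by omega), if_pos h]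
        congr 1
        omega
      · rw [if_neg (by omega), if_neg h]
    -- the scalar identity
    have E1 : (B.coord N) ⁅B (n-1), T c⁆
        = ∑ s ∈ γ.support, γ s * ((if s < 2*m then δ (2*m - 1 - s) else 0)
            - ((s - n : ℕ) : K) * (if s ≤ 2*m then γ (2*m - s) else 0)) := by
      rw [e1]
      exact Finset.sum_congr rfl fun s hs => by rw [key1 s hs]
    have E2 : (B.coord N) ⁅B n, T d⁆
        = ∑ u ∈ δ.support, δ u * (if u < 2*m then γ (2*m - 1 - u) else 0) := by
      rw [e2]
      exact Finset.sum_congr rfl fun u hu => by rw [key2 u hu]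
    have E3 : (B.coord N) ⁅B n, c⁆
        = ∑ s ∈ γ.support, γ s * (if s ≤ 2*m then γ (2*m - s) else 0) := by
      rw [e3]
      exact Finset.sum_congr rfl fun s hs => by rw [key3 s hs]
    have main := congrArg (B.coord N) star2
    rw [map_sub, E1, E2, E3] at main
    have hsplit : ∑ s ∈ γ.support, γ s * ((if s < 2*m then δ (2*m - 1 - s) else 0)
            - ((s - n : ℕ) : K) * (if s ≤ 2*m then γ (2*m - s) else 0))
        = (∑ s ∈ γ.support, γ s * (if s < 2*m then δ (2*m - 1 - s) else 0))
          - ∑ s ∈ γ.support, γ s * (((s - n : ℕ) : K) * (if s ≤ 2*m then γ (2*m - s) else 0)) := by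
      rw [← Finset.sum_sub_distrib]
      exact Finset.sum_congr rfl fun s hs => mul_sub _ _ _
    -- A1 = B1 by reflecting the summation range
    have hA1 : ∑ s ∈ γ.support, γ s * (if s < 2*m then δ (2*m - 1 - s) else 0)
        = ∑ s ∈ Finset.range (2*m), γ s * δ (2*m - 1 - s) := by
      rw [Finset.sum_congr rfl (fun s (hs : s ∈ γ.support) => mul_ite _ _ _ _),
        Finset.sum_congr rfl (fun s (hs : s ∈ γ.support) => by rw [mul_zero]),
        ← Finset.sum_filter]
      refine Finset.sum_subset (fun s hs => Finset.mem_range.mpr (Finset.mem_filter.mp hs).2) ?_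
      intro x hx hnx
      have : γ x = 0 := by
        by_contra h
        exact hnx (Finset.mem_filter.mpr ⟨Finsupp.mem_support_iff.mpr h, Finset.mem_range.mp hx⟩)
      rw [this, zero_mul]
    have hB1 : ∑ u ∈ δ.support, δ u * (if u < 2*m then γ (2*m - 1 - u) else 0)
        = ∑ u ∈ Finset.range (2*m), δ u * γ (2*m - 1 - u) := by
      rw [Finset.sum_congr rfl (fun u (hu : u ∈ δ.support) => mul_ite _ _ _ _),
        Finset.sum_congr rfl (fun u (hu : u ∈ δ.support) => by rw [mul_zero]),
        ← Finset.sum_filter]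
      refine Finset.sum_subset (fun u hu => Finset.mem_range.mpr (Finset.mem_filter.mp hu).2) ?_
      intro x hx hnx
      have : δ x = 0 := by
        by_contra h
        exact hnx (Finset.mem_filter.mpr ⟨Finsupp.mem_support_iff.mpr h, Finset.mem_range.mp hx⟩)
      rw [this, zero_mul]
    have hA1B1 : ∑ s ∈ γ.support, γ s * (if s < 2*m then δ (2*m - 1 - s) else 0)
        = ∑ u ∈ δ.support, δ u * (if u < 2*m then γ (2*m - 1 - u) else 0) := by
      rw [hA1, hB1]
      have hrefl := Finset.sum_range_reflect (fun s => γ s * δ (2*m - 1 - s)) (2*m)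
      rw [← hrefl]
      refine Finset.sum_congr rfl fun j hj => ?_
      have hj' : j < 2*m := Finset.mem_range.mp hj
      rw [show 2*m - 1 - (2*m - 1 - j) = j from by omega, mul_comm]
    -- the two diagonal sums
    have hB2 : ∑ s ∈ γ.support, γ s * (if s ≤ 2*m then γ (2*m - s) else 0)
        = γ m * γ m := by
      rw [Finset.sum_eq_single m]
      · rw [if_pos (by omega), show 2*m - m = m from by omega]
      · intro b hb hbm
        have hmb : m ≤ b := hsupp_ge b hb
        by_cases h : b ≤ 2*m
        · rw [if_pos h, hlow (2*m - b) (by omega), mul_zero]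
        · rw [if_neg h, mul_zero]
      · intro h
        exact absurd hmmem h
    have hA2 : ∑ s ∈ γ.support, γ s * (((s - n : ℕ) : K) * (if s ≤ 2*m then γ (2*m - s) else 0))
        = γ m * (((m - n : ℕ) : K) * γ m) := by
      rw [Finset.sum_eq_single m]
      · rw [if_pos (by omega), show 2*m - m = m from by omega]
      · intro b hb hbm
        have hmb : m ≤ b := hsupp_ge b hb
        by_cases h : b ≤ 2*m
        · rw [if_pos h, hlow (2*m - b) (by omega), mul_zero, mul_zero]
        · rw [if_neg h, mul_zero, mul_zero]
      · intro h
        exact absurd hmmem h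
    have hAB2 : γ m * (((m - n : ℕ) : K) * γ m) = γ m * γ m := by
      linear_combination hsplit - main + hA1B1 - hA2 + hB2
    have hcast : ((m - n : ℕ) : K) = 1 := by
      have h3 : ((m - n : ℕ) : K) * (γ m * γ m) = 1 * (γ m * γ m) := by
        ring_nf
        linear_combination hAB2
      have := mul_right_cancel₀ (mul_ne_zero hγm hγm) h3
      exact this
    have : m - n = 1 := Nat.cast_eq_one.mp hcast
    omega
  -- endgame
  have hbn : ∀ t, n ≤ t → ⁅B n, B t⁆ = 0 := by
    intro t ht
    rcases eq_or_lt_of_le ht with h | h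
    · rw [← h]
      exact lie_self _
    · rw [CformT t (by omega), hc0, map_zero]
  have hgen : ∀ s t, n ≤ s → n ≤ t → ⁅B s, B t⁆ = 0 := by
    intro s t hs ht
    rcases eq_or_lt_of_le hs with h | h
    · rw [← h]
      exact hbn t ht
    · rcases eq_or_lt_of_le ht with h' | h'
      · rw [← h', ← lie_skew, hbn s (by omega), neg_zero]
      · exact hzero s t (by omega) (by omega)
  intro x hx y hy
  induction hx using Submodule.span_induction with
  | mem x hxm =>
    obtain ⟨s, hs, rfl⟩ := hxm
    induction hy using Submodule.span_induction with
    | mem y hym =>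
      obtain ⟨t, ht, rfl⟩ := hym
      exact hgen s t hs ht
    | zero => exact lie_zero _
    | add y z hy hz ihy ihz => rw [lie_add, ihy, ihz, add_zero]
    | smul a y hy ih => rw [lie_smul, ih, smul_zero]
  | zero => exact zero_lie _
  | add x z hx hz ihx ihz => rw [add_lie, ihx, ihz, add_zero]
  | smul a x hx ih => rw [smul_lie, ih, smul_zero]
end

section
/- Let L be a solvable infinite filiform Lie algebra over a field of characteristic zero. Then [L, L] is abelian, i.e., L is metabelian. -/
set_option linter.unnecessarySimpa false

namespace FiliformAux

open Finset

variable {K : Type*} [Field K] {L : Type*} [LieRing L] [LieAlgebra K L]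
variable (B : Module.Basis ℕ K L)

/-- span of basis vectors with index ≥ n -/
def V (n : ℕ) : Submodule K L := Submodule.span K (B '' {k | n ≤ k})

theorem mem_V_iff {x : L} {n : ℕ} : x ∈ V B n ↔ ∀ j, j < n → B.repr x j = 0 := by
  rw [V, Module.Basis.mem_span_image]
  constructor
  · intro h j hj
    by_contra hne
    have : j ∈ (B.repr x).support := Finsupp.mem_support_iff.2 hne
    exact absurd (h this) (by simpa using Nat.not_le.2 hj)
  · intro h q hq
    simp only [Finsupp.mem_support_iff, Finset.mem_coe] at hq
    by_contra hlt
    exact hq (h q (Nat.not_le.1 hlt))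

theorem V_antitone {n m : ℕ} (h : n ≤ m) : V B m ≤ V B n := by
  intro x hx
  rw [mem_V_iff] at hx ⊢
  exact fun j hj => hx j (lt_of_lt_of_le hj h)

theorem repr_eq_zero_of_mem_V' {x : L} {n j : ℕ} (hx : x ∈ V B n) (hj : j < n) :
    B.repr x j = 0 := (mem_V_iff B).1 hx j hj

theorem basis_mem_V {n k : ℕ} (h : n ≤ k) : B k ∈ V B n :=
  Submodule.subset_span ⟨k, h, rfl⟩

/-- double span induction for brackets -/
theorem lie_mem_of_forall {S T : Set ℕ} {W : Submodule K L}
    (h : ∀ u ∈ S, ∀ v ∈ T, ⁅B u, B v⁆ ∈ W)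
    {x y : L} (hx : x ∈ Submodule.span K (B '' S)) (hy : y ∈ Submodule.span K (B '' T)) :
    ⁅x, y⁆ ∈ W := by
  induction hx using Submodule.span_induction with
  | mem z hz =>
    obtain ⟨u, hu, rfl⟩ := hz
    induction hy using Submodule.span_induction with
    | mem w hw => obtain ⟨v, hv, rfl⟩ := hw; exact h u hu v hv
    | zero => simpa using W.zero_mem
    | add y₁ y₂ _ _ h1 h2 => rw [lie_add]; exact W.add_mem h1 h2
    | smul c y₁ _ h1 => rw [lie_smul]; exact W.smul_mem c h1
  | zero => simpa using W.zero_mem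
  | add x₁ x₂ _ _ h1 h2 => rw [add_lie]; exact W.add_mem h1 h2
  | smul c x₁ _ h1 => rw [smul_lie]; exact W.smul_mem c h1

/-- expansion of a linear functional of a bracket over basis coefficients -/
theorem EXP (c : L) (P : ℕ) (x : L) :
    B.repr ⁅c, x⁆ P = (B.repr x).sum fun q a => a * B.repr ⁅c, B q⁆ P := by
  let ψ : L →ₗ[K] K :=
    (Finsupp.lapply P).comp (((B.repr : L ≃ₗ[K] (ℕ →₀ K)) : L →ₗ[K] (ℕ →₀ K)).comp
      (LieAlgebra.ad K L c))
  have hψ : ∀ y : L, ψ y = B.repr ⁅c, y⁆ P := fun y => rfl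
  rw [← hψ]
  have : x = Finsupp.sum (B.repr x) fun q a => a • B q := by
    conv_lhs => rw [← B.linearCombination_repr x]
    rw [Finsupp.linearCombination_apply]
  conv_lhs => rw [this]
  rw [map_finsuppSum]
  refine Finsupp.sum_congr fun q hq => ?_
  rw [map_smul, smul_eq_mul, hψ]

/-- reduce a Finsupp.sum to a finite window -/
theorem WIN (f : ℕ →₀ K) (g : ℕ → K) (a len : ℕ)
    (h : ∀ q, q < a ∨ a + len ≤ q → f q * g q = 0) :
    (f.sum fun q c => c * g q) = ∑ t ∈ Finset.range len, f (a + t) * g (a + t) := by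
  have key : (f.sum fun q c => c * g q) = ∑ q ∈ f.support, f q * g q := by
    rw [Finsupp.sum]
  rw [key]
  set win : Finset ℕ := (Finset.range len).image (a + ·) with hwin
  have hmem : ∀ q, q ∈ win ↔ a ≤ q ∧ q < a + len := by
    intro q
    simp only [hwin, Finset.mem_image, Finset.mem_range]
    constructor
    · rintro ⟨t, ht, rfl⟩; omega
    · rintro ⟨h1, h2⟩; exact ⟨q - a, by omega, by omega⟩
  have e1 : ∑ q ∈ f.support, f q * g q = ∑ q ∈ f.support ∩ win, f q * g q := by
    refine (Finset.sum_subset (Finset.inter_subset_left) ?_).symm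
    intro q hq hq2
    have : q ∉ win := fun hw => hq2 (Finset.mem_inter.2 ⟨hq, hw⟩)
    rw [hmem] at this
    exact h q (by omega)
  have e2 : ∑ q ∈ f.support ∩ win, f q * g q = ∑ q ∈ win, f q * g q := by
    refine Finset.sum_subset (Finset.inter_subset_right) ?_
    intro q hq hq2
    have : q ∉ f.support := fun hs => hq2 (Finset.mem_inter.2 ⟨hs, hq⟩)
    rw [Finsupp.notMem_support_iff.1 this, zero_mul]
  rw [e1, e2, hwin]
  rw [Finset.sum_image (fun x _ y _ h => by omega)]

section WithHa

variable (ha : ∀ i, 1 ≤ i → ⁅B 0, B i⁆ = B (i + 1))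
include ha

theorem sigma_mem {x : L} {n : ℕ} (hn : 1 ≤ n) (hx : x ∈ V B n) :
    ⁅B 0, x⁆ ∈ V B (n + 1) := by
  induction hx using Submodule.span_induction with
  | mem z hz =>
    obtain ⟨k, hk, rfl⟩ := hz
    rw [ha k (le_trans hn hk)]
    exact Submodule.subset_span ⟨k + 1, by simpa using hk, rfl⟩
  | zero => simpa using Submodule.zero_mem _
  | add x₁ x₂ _ _ h1 h2 => rw [lie_add]; exact Submodule.add_mem _ h1 h2
  | smul c x₁ _ h1 => rw [lie_smul]; exact Submodule.smul_mem _ c h1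

theorem sigma_repr {x : L} (hx : x ∈ V B 1) (j : ℕ) :
    B.repr ⁅B 0, x⁆ (j + 1) = B.repr x j := by
  induction hx using Submodule.span_induction with
  | mem z hz =>
    obtain ⟨k, hk, rfl⟩ := hz
    rw [ha k hk]
    simp only [Module.Basis.repr_self, Finsupp.single_apply]
    by_cases h : k = j
    · simp [h]
    · rw [if_neg (by omega), if_neg h]
  | zero => simp
  | add x₁ x₂ _ _ h1 h2 => simp only [lie_add, map_add, Finsupp.add_apply, h1, h2]
  | smul c x₁ _ h1 => simp only [lie_smul, map_smul, Finsupp.smul_apply, h1]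

theorem sigma_iter_mem {x : L} {n : ℕ} (hn : 1 ≤ n) (hx : x ∈ V B n) (d : ℕ) :
    (fun y => ⁅B 0, y⁆)^[d] x ∈ V B (n + d) := by
  induction d generalizing x n with
  | zero => simpa using hx
  | succ d ih =>
    rw [Function.iterate_succ_apply]
    have := ih (n := n + 1) (by omega) (sigma_mem B ha hn hx)
    simpa [Nat.add_assoc, Nat.add_comm 1 d] using this

theorem sigma_iter_repr {x : L} {n : ℕ} (hn : 1 ≤ n) (hx : x ∈ V B n) (d j : ℕ) :
    B.repr ((fun y => ⁅B 0, y⁆)^[d] x) (j + d) = B.repr x j := by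
  induction d generalizing x n j with
  | zero => simp
  | succ d ih =>
    rw [Function.iterate_succ_apply]
    have h1 : ⁅B 0, x⁆ ∈ V B (n + 1) := sigma_mem B ha hn hx
    have h2 := ih (n := n + 1) (j := j + 1) (by omega) h1
    have h3 : x ∈ V B 1 := V_antitone B hn hx
    have h4 := sigma_repr B ha h3 j
    calc B.repr ((fun y => ⁅B 0, y⁆)^[d] ⁅B 0, x⁆) (j + (d + 1))
        = B.repr ((fun y => ⁅B 0, y⁆)^[d] ⁅B 0, x⁆) ((j + 1) + d) := by ring_nf
      _ = B.repr ⁅B 0, x⁆ (j + 1) := h2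
      _ = B.repr x j := h4

end WithHa

/-- leading coefficient of a bracket -/
theorem lie_leading {s w : ℕ}
    (hs : ∀ u v, w ≤ u → w ≤ v → ⁅B u, B v⁆ ∈ V B (u + v + 1 + s))
    {x y : L} {p q : ℕ} (hpw : w ≤ p) (hqw : w ≤ q)
    (hx : x ∈ V B p) (hy : y ∈ V B q) :
    ⁅x, y⁆ ∈ V B (p + q + 1 + s) ∧
    B.repr ⁅x, y⁆ (p + q + 1 + s)
      = B.repr x p * B.repr y q * B.repr ⁅B p, B q⁆ (p + q + 1 + s) := by
  set ξ := B.repr x p with hξ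
  set η := B.repr y q with hη
  set rx := x - ξ • B p with hrx
  set ry := y - η • B q with hry
  have hrxm : rx ∈ V B (p + 1) := by
    rw [mem_V_iff]
    intro j hj
    rw [hrx, map_sub, map_smul, Finsupp.sub_apply, Finsupp.smul_apply, Module.Basis.repr_self,
      Finsupp.single_apply]
    rcases Nat.lt_or_ge j p with hlt | hge
    · rw [repr_eq_zero_of_mem_V' B hx hlt, if_neg (by omega)]; simp
    · have : j = p := by omega
      subst this
      rw [if_pos rfl]; simp [hξ]
  have hrym : ry ∈ V B (q + 1) := by
    rw [mem_V_iff]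
    intro j hj
    rw [hry, map_sub, map_smul, Finsupp.sub_apply, Finsupp.smul_apply, Module.Basis.repr_self,
      Finsupp.single_apply]
    rcases Nat.lt_or_ge j q with hlt | hge
    · rw [repr_eq_zero_of_mem_V' B hy hlt, if_neg (by omega)]; simp
    · have : j = q := by omega
      subst this
      rw [if_pos rfl]; simp [hη]
  have hdecomp : ⁅x, y⁆ = (ξ * η) • ⁅B p, B q⁆ + (ξ • ⁅B p, ry⁆ + η • ⁅rx, B q⁆ + ⁅rx, ry⁆) := by
    have hx' : x = ξ • B p + rx := by rw [hrx]; abel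
    have hy' : y = η • B q + ry := by rw [hry]; abel
    rw [hx', hy']
    simp only [lie_add, add_lie, lie_smul, smul_lie, smul_smul]
    module
  have htail : ξ • ⁅B p, ry⁆ + η • ⁅rx, B q⁆ + ⁅rx, ry⁆ ∈ V B (p + q + 2 + s) := by
    have t1 : ⁅B p, ry⁆ ∈ V B (p + q + 2 + s) := by
      refine lie_mem_of_forall B (S := {k | p ≤ k}) (T := {k | q + 1 ≤ k}) ?_
        (basis_mem_V B (le_refl p)) hrym
      intro u hu v hv
      exact V_antitone B (by simp only [Set.mem_setOf_eq] at hu hv; omega)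
        (hs u v (le_trans hpw hu) (by simp only [Set.mem_setOf_eq] at hv; omega))
    have t2 : ⁅rx, B q⁆ ∈ V B (p + q + 2 + s) := by
      refine lie_mem_of_forall B (S := {k | p + 1 ≤ k}) (T := {k | q ≤ k}) ?_
        hrxm (basis_mem_V B (le_refl q))
      intro u hu v hv
      exact V_antitone B (by simp only [Set.mem_setOf_eq] at hu hv; omega)
        (hs u v (by simp only [Set.mem_setOf_eq] at hu; omega) (le_trans hqw hv))
    have t3 : ⁅rx, ry⁆ ∈ V B (p + q + 2 + s) := by
      refine lie_mem_of_forall B (S := {k | p + 1 ≤ k}) (T := {k | q + 1 ≤ k}) ?_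
        hrxm hrym
      intro u hu v hv
      exact V_antitone B (by simp only [Set.mem_setOf_eq] at hu hv; omega)
        (hs u v (by simp only [Set.mem_setOf_eq] at hu; omega)
          (by simp only [Set.mem_setOf_eq] at hv; omega))
    exact Submodule.add_mem _ (Submodule.add_mem _ (Submodule.smul_mem _ _ t1)
      (Submodule.smul_mem _ _ t2)) t3
  constructor
  · rw [hdecomp]
    refine Submodule.add_mem _ (Submodule.smul_mem _ _ (hs p q hpw hqw))
      (V_antitone B (by omega) htail)
  · rw [hdecomp]
    have h0 : B.repr ((ξ * η) • ⁅B p, B q⁆ + (ξ • ⁅B p, ry⁆ + η • ⁅rx, B q⁆ + ⁅rx, ry⁆))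
        = (ξ * η) • B.repr ⁅B p, B q⁆
          + B.repr (ξ • ⁅B p, ry⁆ + η • ⁅rx, B q⁆ + ⁅rx, ry⁆) := by
      rw [map_add, map_smul]
    rw [h0, Finsupp.add_apply, Finsupp.smul_apply,
      repr_eq_zero_of_mem_V' B htail (by omega), add_zero, smul_eq_mul]

section Main

variable (ha : ∀ i, 1 ≤ i → ⁅B 0, B i⁆ = B (i + 1))
variable (hfil : ∀ i, 1 ≤ i → ∀ j, 1 ≤ j →
      ⁅B i, B j⁆ ∈ Submodule.span K {x : L | ∃ t, i + j + 1 ≤ t ∧ x = B t})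

include hfil in
theorem lie_basis_V : ∀ u v, 1 ≤ u → 1 ≤ v → ⁅B u, B v⁆ ∈ V B (u + v + 1) := by
  intro u v hu hv
  refine Submodule.span_le.2 ?_ (hfil u hu v hv)
  rintro x ⟨t, ht, rfl⟩
  exact Submodule.subset_span ⟨t, ht, rfl⟩

include hfil in
theorem exists_min {x₀ : ℕ} (hx₀ : 1 ≤ x₀)
    (hex : ∃ u v, x₀ ≤ u ∧ x₀ ≤ v ∧ ⁅B u, B v⁆ ≠ 0) :
    ∃ s u v, x₀ ≤ u ∧ x₀ ≤ v ∧ B.repr ⁅B u, B v⁆ (u + v + 1 + s) ≠ 0 ∧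
      ∀ u' v', x₀ ≤ u' → x₀ ≤ v' → ⁅B u', B v'⁆ ∈ V B (u' + v' + 1 + s) := by
  classical
  have hQ : ∃ s, ∃ u v, x₀ ≤ u ∧ x₀ ≤ v ∧ B.repr ⁅B u, B v⁆ (u + v + 1 + s) ≠ 0 := by
    obtain ⟨u, v, hu, hv, hne⟩ := hex
    have h1 : B.repr ⁅B u, B v⁆ ≠ 0 := by
      intro h
      exact hne (by simpa using congrArg B.repr.symm h)
    obtain ⟨j, hj⟩ : ∃ j, B.repr ⁅B u, B v⁆ j ≠ 0 := by
      by_contra hcon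
      push_neg at hcon
      exact h1 (Finsupp.ext hcon)
    have hjge : u + v + 1 ≤ j := by
      by_contra hlt
      exact hj (repr_eq_zero_of_mem_V' B
        (lie_basis_V B hfil u v (le_trans hx₀ hu) (le_trans hx₀ hv)) (by omega))
    exact ⟨j - (u + v + 1), u, v, hu, hv, by
      convert hj using 2
      omega⟩
  obtain ⟨u, v, hu, hv, hne⟩ := Nat.find_spec hQ
  refine ⟨Nat.find hQ, u, v, hu, hv, hne, ?_⟩
  intro u' v' hu' hv'
  rw [mem_V_iff]
  intro j hj
  rcases Nat.lt_or_ge j (u' + v' + 1) with h1 | h1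
  · exact repr_eq_zero_of_mem_V' B
      (lie_basis_V B hfil u' v' (le_trans hx₀ hu') (le_trans hx₀ hv')) h1
  · by_contra hne'
    refine Nat.find_min hQ (show j - (u' + v' + 1) < Nat.find hQ by omega)
      ⟨u', v', hu', hv', ?_⟩
    convert hne' using 2
    omega

include ha hfil in
theorem chain (HH : ∀ x₀ : ℕ, ∃ u v, x₀ ≤ u ∧ x₀ ≤ v ∧ ⁅B u, B v⁆ ≠ 0) :
    ∀ m : ℕ, ∃ n X, 1 ≤ n ∧ X ∈ LieAlgebra.derivedSeries K L (m + 1) ∧ X ∈ V B n ∧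
      B.repr X n ≠ 0 := by
  intro m
  induction m with
  | zero =>
    refine ⟨2, B 2, by norm_num, ?_, basis_mem_V B (le_refl 2), by simp⟩
    have h2 : (B 2 : L) = ⁅B 0, B 1⁆ := (ha 1 le_rfl).symm
    rw [h2, LieAlgebra.derivedSeries_def, LieAlgebra.derivedSeriesOfIdeal_succ,
      LieAlgebra.derivedSeriesOfIdeal_zero]
    exact LieSubmodule.lie_mem_lie trivial trivial
  | succ m ih =>
    obtain ⟨n, X, hn, hDS, hV, hlead⟩ := ih
    obtain ⟨s, u, v, hu, hv, hg, hs⟩ := exists_min B hfil hn (HH n)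
    have hiter_mem : ∀ d, (fun y : L => ⁅B 0, y⁆)^[d] X ∈
        LieAlgebra.derivedSeries K L (m + 1) := by
      intro d
      induction d with
      | zero => simpa using hDS
      | succ d ihd =>
        rw [Function.iterate_succ_apply']
        exact (LieAlgebra.derivedSeries K L (m + 1)).lie_mem ihd
    have hX₁V : (fun y : L => ⁅B 0, y⁆)^[u - n] X ∈ V B u := by
      have := sigma_iter_mem B ha hn hV (u - n)
      rwa [show n + (u - n) = u from by omega] at this
    have hX₂V : (fun y : L => ⁅B 0, y⁆)^[v - n] X ∈ V B v := by
      have := sigma_iter_mem B ha hn hV (v - n)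
      rwa [show n + (v - n) = v from by omega] at this
    have hlead₁ : B.repr ((fun y : L => ⁅B 0, y⁆)^[u - n] X) u = B.repr X n := by
      have := sigma_iter_repr B ha hn hV (u - n) n
      rwa [show n + (u - n) = u from by omega] at this
    have hlead₂ : B.repr ((fun y : L => ⁅B 0, y⁆)^[v - n] X) v = B.repr X n := by
      have := sigma_iter_repr B ha hn hV (v - n) n
      rwa [show n + (v - n) = v from by omega] at this
    obtain ⟨hmem, hrepr⟩ := lie_leading B hs hu hv hX₁V hX₂V
    refine ⟨u + v + 1 + s, ⁅(fun y : L => ⁅B 0, y⁆)^[u - n] X,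
      (fun y : L => ⁅B 0, y⁆)^[v - n] X⁆, by omega, ?_, hmem, ?_⟩
    · rw [LieAlgebra.derivedSeries_def, LieAlgebra.derivedSeriesOfIdeal_succ,
        ← LieAlgebra.derivedSeries_def]
      exact LieSubmodule.lie_mem_lie (hiter_mem _) (hiter_mem _)
    · rw [hrepr, hlead₁, hlead₂]
      exact mul_ne_zero (mul_ne_zero hlead hlead) hg

include ha hfil in
theorem eventually_zero (hsolv : LieAlgebra.IsSolvable L) :
    ∃ M : ℕ, 2 ≤ M ∧ ∀ u v, M ≤ u → M ≤ v → ⁅B u, B v⁆ = 0 := by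
  by_contra hcon
  push_neg at hcon
  have HH : ∀ x₀ : ℕ, ∃ u v, x₀ ≤ u ∧ x₀ ≤ v ∧ ⁅B u, B v⁆ ≠ 0 := by
    intro x₀
    obtain ⟨u, v, hu, hv, hne⟩ := hcon (max 2 x₀) (le_max_left _ _)
    exact ⟨u, v, le_trans (le_max_right _ _) hu, le_trans (le_max_right _ _) hv, hne⟩
  obtain ⟨k, hk⟩ := LieAlgebra.IsSolvable.solvable K L
  obtain ⟨n, X, hn, hDS, hV, hlead⟩ := chain B ha hfil HH k
  have hX0 : X = 0 := by
    have h1 : LieAlgebra.derivedSeries K L (k + 1) ≤ LieAlgebra.derivedSeries K L k :=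
      LieAlgebra.derivedSeriesOfIdeal_antitone ⊤ (Nat.le_succ k)
    have := h1 hDS
    rw [hk] at this
    simpa using this
  rw [hX0] at hlead
  simp at hlead

include ha hfil in
theorem step [CharZero K] {n : ℕ} (hn : 1 ≤ n)
    (H1 : ∀ u v, n + 2 ≤ u → n + 2 ≤ v → ⁅B u, B v⁆ = 0) :
    ∀ u v, n + 1 ≤ u → n + 1 ≤ v → ⁅B u, B v⁆ = 0 := by
  classical
  set σ : L → L := fun y => ⁅B 0, y⁆ with hσ
  set Z : L := ⁅B (n + 1), B (n + 2)⁆ with hZdef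
  set W₀ : L := ⁅B n, B (n + 2)⁆ with hWdef
  -- (1) row shift for row (n+1)
  have RA : ∀ d, ⁅B (n + 1), B (n + 2 + d)⁆ = σ^[d] Z := by
    intro d
    induction d with
    | zero => simp [hσ, hZdef]
    | succ d ih =>
      have hlz : ⁅B 0, ⁅B (n + 1), B (n + 2 + d)⁆⁆
          = ⁅⁅B 0, B (n + 1)⁆, B (n + 2 + d)⁆ + ⁅B (n + 1), ⁅B 0, B (n + 2 + d)⁆⁆ :=
        leibniz_lie _ _ _
      rw [ha (n + 1) (by omega), ha (n + 2 + d) (by omega)] at hlz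
      rw [H1 (n + 2) (n + 2 + d) (by omega) (by omega), zero_add] at hlz
      have : (n + 2 + (d + 1)) = (n + 2 + d) + 1 := by omega
      rw [this, ← hlz, ih, Function.iterate_succ_apply' σ d Z]
  -- main reduction: suffices Z = 0
  suffices hZ : Z = 0 by
    have hrow : ∀ j, n + 2 ≤ j → ⁅B (n + 1), B j⁆ = 0 := by
      intro j hj
      have := RA (j - (n + 2))
      rw [show n + 2 + (j - (n + 2)) = j from by omega] at this
      rw [this, hZ]
      exact Function.iterate_fixed (by simp [hσ]) _
    intro u v hu hv
    rcases Nat.lt_or_ge u (n + 2) with hu2 | hu2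
    · have hu' : u = n + 1 := by omega
      subst hu'
      rcases Nat.lt_or_ge v (n + 2) with hv2 | hv2
      · have : v = n + 1 := by omega
        subst this
        exact lie_self _
      · exact hrow v hv2
    · rcases Nat.lt_or_ge v (n + 2) with hv2 | hv2
      · have hv' : v = n + 1 := by omega
        subst hv'
        rw [← lie_skew, hrow u hu2, neg_zero]
      · exact H1 u v hu2 hv2
  -- suppose Z ≠ 0
  by_contra hZ
  have hZV : Z ∈ V B (2 * n + 4) := by
    have := lie_basis_V B hfil (n + 1) (n + 2) (by omega) (by omega)
    rwa [show (n + 1) + (n + 2) + 1 = 2 * n + 4 from by omega] at this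
  have hWV : W₀ ∈ V B (2 * n + 3) := by
    have := lie_basis_V B hfil n (n + 2) hn (by omega)
    rwa [show n + (n + 2) + 1 = 2 * n + 3 from by omega] at this
  -- minimal coefficient of Z
  have hex : ∃ s, B.repr Z (2 * n + 4 + s) ≠ 0 := by
    have h1 : B.repr Z ≠ 0 := by
      intro h
      exact hZ (by simpa using congrArg B.repr.symm h)
    obtain ⟨j, hj⟩ : ∃ j, B.repr Z j ≠ 0 := by
      by_contra hcon
      push_neg at hcon
      exact h1 (Finsupp.ext hcon)
    have hjge : 2 * n + 4 ≤ j := by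
      by_contra hlt
      exact hj (repr_eq_zero_of_mem_V' B hZV (by omega))
    exact ⟨j - (2 * n + 4), by
      convert hj using 2
      omega⟩
  set s := Nat.find hex with hs
  have hcs : B.repr Z (2 * n + 4 + s) ≠ 0 := Nat.find_spec hex
  have Zlow : ∀ j, j < 2 * n + 4 + s → B.repr Z j = 0 := by
    intro j hj
    rcases Nat.lt_or_ge j (2 * n + 4) with h1 | h1
    · exact repr_eq_zero_of_mem_V' B hZV h1
    · by_contra hne
      refine Nat.find_min hex (show j - (2 * n + 4) < s by omega) ?_
      convert hne using 2
      omega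
  have ZmemS : Z ∈ V B (2 * n + 4 + s) := (mem_V_iff B).2 Zlow
  -- (2) row (n) iteration
  have RB : ∀ d, ⁅B n, B (n + 3 + d)⁆
      = σ^[d + 1] W₀ - ((d + 1 : ℕ) : K) • σ^[d] Z := by
    intro d
    induction d with
    | zero =>
      have hlz : ⁅B 0, ⁅B n, B (n + 2)⁆⁆
          = ⁅⁅B 0, B n⁆, B (n + 2)⁆ + ⁅B n, ⁅B 0, B (n + 2)⁆⁆ := leibniz_lie _ _ _
      rw [ha n hn, ha (n + 2) (by omega)] at hlz
      have : ⁅B n, B (n + 3 + 0)⁆ = ⁅B 0, W₀⁆ - Z := by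
        rw [hWdef, hlz, hZdef]
        rw [show n + 3 + 0 = n + 2 + 1 from by omega]
        abel
      rw [this]
      simp [hσ]
    | succ d ih =>
      have hlz : ⁅B 0, ⁅B n, B (n + 3 + d)⁆⁆
          = ⁅⁅B 0, B n⁆, B (n + 3 + d)⁆ + ⁅B n, ⁅B 0, B (n + 3 + d)⁆⁆ := leibniz_lie _ _ _
      rw [ha n hn, ha (n + 3 + d) (by omega)] at hlz
      have hra : ⁅B (n + 1), B (n + 3 + d)⁆ = σ^[d + 1] Z := by
        have := RA (d + 1)
        rwa [show n + 2 + (d + 1) = n + 3 + d from by omega] at this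
      have hstep : ⁅B n, B (n + 3 + d + 1)⁆
          = σ ⁅B n, B (n + 3 + d)⁆ - σ^[d + 1] Z := by
        rw [hσ]
        simp only
        rw [hlz, hra]
        abel
      rw [show n + 3 + (d + 1) = n + 3 + d + 1 from by omega, hstep, ih]
      have hσlin : σ (σ^[d + 1] W₀ - ((d + 1 : ℕ) : K) • σ^[d] Z)
          = σ^[d + 2] W₀ - ((d + 1 : ℕ) : K) • σ^[d + 1] Z := by
        rw [hσ]
        simp only [lie_sub, lie_smul]
        rw [← Function.iterate_succ_apply' (fun y : L => ⁅B 0, y⁆) (d + 1) W₀,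
          ← Function.iterate_succ_apply' (fun y : L => ⁅B 0, y⁆) d Z]
      rw [hσlin]
      have : ((d + 1 + 1 : ℕ) : K) = ((d + 1 : ℕ) : K) + 1 := by push_cast; ring
      rw [this, add_smul, one_smul]
      abel
  -- (3) Jacobi identity
  have R2 : ⁅B (n + 2), ⁅B (n + 1), B n⁆⁆ = 0 := by
    have hU : ⁅B (n + 1), B n⁆ ∈ V B (n + 2) := by
      have h1 : ⁅B n, B (n + 1)⁆ ∈ V B (n + 2) :=
        V_antitone B (by omega) (lie_basis_V B hfil n (n + 1) hn (by omega))
      rw [← lie_skew]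
      exact Submodule.neg_mem _ h1
    have := lie_mem_of_forall B (S := {k | n + 2 ≤ k}) (T := {k | n + 2 ≤ k})
      (W := (⊥ : Submodule K L))
      (fun u hu v hv => by
        rw [H1 u v hu hv]; exact Submodule.zero_mem _)
      (basis_mem_V B (le_refl (n + 2))) hU
    simpa using this
  have jac : ⁅B n, Z⁆ = ⁅B (n + 1), W₀⁆ := by
    have h1 : ⁅⁅B (n + 1), B (n + 2)⁆, B n⁆
        = ⁅B (n + 1), ⁅B (n + 2), B n⁆⁆ - ⁅B (n + 2), ⁅B (n + 1), B n⁆⁆ := lie_lie _ _ _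
    rw [R2, sub_zero] at h1
    have h2 : ⁅B (n + 2), B n⁆ = -W₀ := by rw [hWdef, ← lie_skew]
    rw [h2, lie_neg] at h1
    have h3 : ⁅Z, B n⁆ = -⁅B n, Z⁆ := by rw [← lie_skew]
    rw [hZdef] at h3 ⊢
    rw [h3] at h1
    exact neg_injective h1
  -- (4) coefficient extraction at position P
  set P : ℕ := 3 * n + 5 + 2 * s with hP
  have hWrepr : ∀ t, t ≤ s →
      B.repr (σ^[n + 2 + s + t] W₀) P = B.repr W₀ (2 * n + 3 + (s - t)) := by
    intro t ht
    have := sigma_iter_repr B ha (show 1 ≤ 2 * n + 3 from by omega) hWV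
      (n + 2 + s + t) (2 * n + 3 + (s - t))
    convert this using 2
    omega
  have hZrepr1 : ∀ t, t ≤ s →
      B.repr (σ^[n + 1 + s + t] Z) P = B.repr Z (2 * n + 4 + (s - t)) := by
    intro t ht
    have := sigma_iter_repr B ha (show 1 ≤ 2 * n + 4 from by omega) hZV
      (n + 1 + s + t) (2 * n + 4 + (s - t))
    convert this using 2
    omega
  have hZrepr2 : ∀ t, t ≤ s →
      B.repr (σ^[n + 1 + t] Z) P = B.repr Z (2 * n + 4 + s + (s - t)) := by
    intro t ht
    have := sigma_iter_repr B ha (show 1 ≤ 2 * n + 4 from by omega) hZV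
      (n + 1 + t) (2 * n + 4 + s + (s - t))
    convert this using 2
    omega
  -- LHS expansion
  have hLHS : B.repr ⁅B n, Z⁆ P
      = ∑ t ∈ Finset.range (s + 1),
          B.repr Z (2 * n + 4 + s + t) * B.repr ⁅B n, B (2 * n + 4 + s + t)⁆ P := by
    rw [EXP B (B n) P Z]
    refine WIN (B.repr Z) (fun q => B.repr ⁅B n, B q⁆ P) (2 * n + 4 + s) (s + 1) ?_
    intro q hq
    rcases hq with h1 | h1
    · rw [Zlow q h1, zero_mul]
    · have hq1 : 1 ≤ q := by omega
      have hmem : ⁅B n, B q⁆ ∈ V B (n + q + 1) := lie_basis_V B hfil n q hn hq1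
      rw [repr_eq_zero_of_mem_V' B hmem (by omega), mul_zero]
  have hLHS2 : B.repr ⁅B n, Z⁆ P
      = ∑ t ∈ Finset.range (s + 1),
          B.repr Z (2 * n + 4 + s + t) *
            (B.repr W₀ (2 * n + 3 + (s - t))
              - ((n + 2 + s + t : ℕ) : K) * B.repr Z (2 * n + 4 + (s - t))) := by
    rw [hLHS]
    refine Finset.sum_congr rfl fun t ht => ?_
    have ht' : t ≤ s := by
      simp only [Finset.mem_range] at ht
      omega
    have hRB := RB (n + 1 + s + t)
    rw [show n + 3 + (n + 1 + s + t) = 2 * n + 4 + s + t from by omega] at hRB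
    rw [hRB]
    have hsub : B.repr (σ^[n + 1 + s + t + 1] W₀ - ((n + 1 + s + t + 1 : ℕ) : K) •
          σ^[n + 1 + s + t] Z) P
        = B.repr (σ^[n + 1 + s + t + 1] W₀) P
          - ((n + 1 + s + t + 1 : ℕ) : K) * B.repr (σ^[n + 1 + s + t] Z) P := by
      rw [map_sub, Finsupp.sub_apply, map_smul, Finsupp.smul_apply, smul_eq_mul]
    rw [hsub, show n + 1 + s + t + 1 = n + 2 + s + t from by omega,
      hWrepr t ht', hZrepr1 t ht']
  -- RHS expansion
  have hRHS : B.repr ⁅B (n + 1), W₀⁆ P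
      = ∑ t ∈ Finset.range (s + 1),
          B.repr W₀ (2 * n + 3 + t) * B.repr ⁅B (n + 1), B (2 * n + 3 + t)⁆ P := by
    rw [EXP B (B (n + 1)) P W₀]
    refine WIN (B.repr W₀) (fun q => B.repr ⁅B (n + 1), B q⁆ P) (2 * n + 3) (s + 1) ?_
    intro q hq
    rcases hq with h1 | h1
    · rw [repr_eq_zero_of_mem_V' B hWV h1, zero_mul]
    · have hra := RA (q - (n + 2))
      rw [show n + 2 + (q - (n + 2)) = q from by omega] at hra
      have hmem : σ^[q - (n + 2)] Z ∈ V B (2 * n + 4 + s + (q - (n + 2))) :=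
        sigma_iter_mem B ha (by omega) ZmemS (q - (n + 2))
      rw [hra, repr_eq_zero_of_mem_V' B hmem (by omega), mul_zero]
  have hRHS2 : B.repr ⁅B (n + 1), W₀⁆ P
      = ∑ t ∈ Finset.range (s + 1),
          B.repr W₀ (2 * n + 3 + t) * B.repr Z (2 * n + 4 + s + (s - t)) := by
    rw [hRHS]
    refine Finset.sum_congr rfl fun t ht => ?_
    have ht' : t ≤ s := by
      simp only [Finset.mem_range] at ht
      omega
    have hra := RA (n + 1 + t)
    rw [show n + 2 + (n + 1 + t) = 2 * n + 3 + t from by omega] at hra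
    rw [hra, hZrepr2 t ht']
  -- reflect the RHS sum
  have hreflect : ∑ t ∈ Finset.range (s + 1),
        B.repr W₀ (2 * n + 3 + t) * B.repr Z (2 * n + 4 + s + (s - t))
      = ∑ t ∈ Finset.range (s + 1),
          B.repr Z (2 * n + 4 + s + t) * B.repr W₀ (2 * n + 3 + (s - t)) := by
    rw [← Finset.sum_range_reflect]
    refine Finset.sum_congr rfl fun t ht => ?_
    have ht' : t ≤ s := by
      simp only [Finset.mem_range] at ht
      omega
    rw [show s + 1 - 1 - t = s - t from by omega,
      show s - (s - t) = t from by omega, mul_comm]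
  -- the error-term sum is a single term
  have hsingle : ∑ t ∈ Finset.range (s + 1),
        B.repr Z (2 * n + 4 + s + t) *
          (((n + 2 + s + t : ℕ) : K) * B.repr Z (2 * n + 4 + (s - t)))
      = B.repr Z (2 * n + 4 + s) * (((n + 2 + s : ℕ) : K) * B.repr Z (2 * n + 4 + s)) := by
    rw [Finset.sum_eq_single_of_mem 0 (by simp)]
    · norm_num
    · intro t ht htne
      have ht' : t ≤ s := by
        simp only [Finset.mem_range] at ht
        omega
      rw [Zlow (2 * n + 4 + (s - t)) (by omega), mul_zero, mul_zero]
  -- put it together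
  have heq : B.repr ⁅B n, Z⁆ P = B.repr ⁅B (n + 1), W₀⁆ P := by rw [jac]
  rw [hLHS2, hRHS2, hreflect] at heq
  have hsplit : ∑ t ∈ Finset.range (s + 1),
        B.repr Z (2 * n + 4 + s + t) *
          (B.repr W₀ (2 * n + 3 + (s - t))
            - ((n + 2 + s + t : ℕ) : K) * B.repr Z (2 * n + 4 + (s - t)))
      = (∑ t ∈ Finset.range (s + 1),
          B.repr Z (2 * n + 4 + s + t) * B.repr W₀ (2 * n + 3 + (s - t)))
        - ∑ t ∈ Finset.range (s + 1),
            B.repr Z (2 * n + 4 + s + t) *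
              (((n + 2 + s + t : ℕ) : K) * B.repr Z (2 * n + 4 + (s - t))) := by
    rw [← Finset.sum_sub_distrib]
    refine Finset.sum_congr rfl fun t ht => ?_
    ring
  rw [hsplit, hsingle] at heq
  have hzero : B.repr Z (2 * n + 4 + s) * (((n + 2 + s : ℕ) : K) *
      B.repr Z (2 * n + 4 + s)) = 0 := sub_eq_self.1 heq
  have hcast : ((n + 2 + s : ℕ) : K) ≠ 0 := Nat.cast_ne_zero.2 (by omega)
  rcases mul_eq_zero.1 hzero with h | h
  · exact hcs h
  · rcases mul_eq_zero.1 h with h' | h'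
    · exact hcast h'
    · exact hcs h' 

include ha hfil in
theorem all2 [CharZero K] (hsolv : LieAlgebra.IsSolvable L) :
    ∀ u v, 2 ≤ u → 2 ≤ v → ⁅B u, B v⁆ = 0 := by
  obtain ⟨M, hM2, hM⟩ := eventually_zero B ha hfil hsolv
  have key : ∀ e, ∀ u v, max 2 (M - e) ≤ u → max 2 (M - e) ≤ v → ⁅B u, B v⁆ = 0 := by
    intro e
    induction e with
    | zero =>
      intro u v hu hv
      exact hM u v (by omega) (by omega)
    | succ e ih =>
      by_cases hc : M - e ≤ 2
      · intro u v hu hv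
        exact ih u v (by omega) (by omega)
      · have H1 : ∀ u v, (M - e - 2) + 2 ≤ u → (M - e - 2) + 2 ≤ v → ⁅B u, B v⁆ = 0 := by
          intro u v hu hv
          exact ih u v (by omega) (by omega)
        have hstep := step B ha hfil (show 1 ≤ M - e - 2 from by omega) H1
        intro u v hu hv
        exact hstep u v (by omega) (by omega)
  intro u v hu hv
  exact key M u v (by omega) (by omega)

end Main

end FiliformAux

/-- Let `L` be a solvable infinite filiform Lie algebra over a field of
characteristic zero (basis `B` with `B 0 = a`, `B i = eᵢ`,
`[a, eᵢ] = e_{i+1}`, `[eᵢ, eⱼ] ∈ span {e_k : k ≥ i+j+1}`).  Then `[L, L]` is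
abelian, i.e. `L` is metabelian. -/
theorem filiform_solvable_metabelian (K : Type*) [Field K] [CharZero K]
    (L : Type*) [LieRing L] [LieAlgebra K L] (B : Module.Basis ℕ K L)
    (ha : ∀ i, 1 ≤ i → ⁅B 0, B i⁆ = B (i + 1))
    (hfil : ∀ i, 1 ≤ i → ∀ j, 1 ≤ j →
      ⁅B i, B j⁆ ∈ Submodule.span K {x : L | ∃ t, i + j + 1 ≤ t ∧ x = B t})
    (hsolv : LieAlgebra.IsSolvable L) :
    ∀ x ∈ LieAlgebra.derivedSeries K L 1, ∀ y ∈ LieAlgebra.derivedSeries K L 1,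
      ⁅x, y⁆ = 0 := by
  intro x hx y hy
  have hzero := FiliformAux.all2 B ha hfil hsolv
  -- every bracket of two elements of L lies in V B 2
  have hbr : ∀ z w : L, ⁅z, w⁆ ∈ FiliformAux.V B 2 := by
    intro z w
    have hz : z ∈ Submodule.span K (B '' Set.univ) := by
      rw [Set.image_univ, B.span_eq]
      trivial
    have hw : w ∈ Submodule.span K (B '' Set.univ) := by
      rw [Set.image_univ, B.span_eq]
      trivial
    refine FiliformAux.lie_mem_of_forall B (S := Set.univ) (T := Set.univ) ?_ hz hw
    intro u _ v _
    match u, v with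
    | 0, 0 => rw [lie_self]; exact Submodule.zero_mem _
    | 0, v + 1 =>
      rw [ha (v + 1) (by omega)]
      exact FiliformAux.basis_mem_V B (by omega)
    | u + 1, 0 =>
      rw [← lie_skew, ha (u + 1) (by omega)]
      exact Submodule.neg_mem _ (FiliformAux.basis_mem_V B (by omega))
    | u + 1, v + 1 =>
      exact FiliformAux.V_antitone B (by omega)
        (FiliformAux.lie_basis_V B hfil (u + 1) (v + 1) (by omega) (by omega))
  -- derived series 1 lies in V B 2
  have hDS1 : ∀ z, z ∈ LieAlgebra.derivedSeries K L 1 → z ∈ FiliformAux.V B 2 := by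
    intro z hz
    have h1 : LieAlgebra.derivedSeries K L 1 = ⁅(⊤ : LieIdeal K L), (⊤ : LieIdeal K L)⁆ := by
      rw [LieAlgebra.derivedSeries_def, LieAlgebra.derivedSeriesOfIdeal_succ,
        LieAlgebra.derivedSeriesOfIdeal_zero]
    rw [h1] at hz
    have h2 : z ∈ Submodule.span K
        { m : L | ∃ a ∈ (⊤ : LieIdeal K L), ∃ b ∈ (⊤ : LieIdeal K L), ⁅a, b⁆ = m } := by
      rw [← LieSubmodule.lieIdeal_oper_eq_linear_span']
      exact (LieSubmodule.mem_toSubmodule _).2 hz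
    refine Submodule.span_le.2 ?_ h2
    rintro _ ⟨a, _, b, _, rfl⟩
    exact hbr a b
  -- conclude
  have hx2 : x ∈ Submodule.span K (B '' {k | 2 ≤ k}) := hDS1 x hx
  have hy2 : y ∈ Submodule.span K (B '' {k | 2 ≤ k}) := hDS1 y hy
  have := FiliformAux.lie_mem_of_forall B (S := {k | 2 ≤ k}) (T := {k | 2 ≤ k})
    (W := (⊥ : Submodule K L))
    (fun u hu v hv => by
      rw [hzero u v hu hv]
      exact Submodule.zero_mem _) hx2 hy2
  simpa using this
end

section
/- Suppose the structure constants (λ_{js}) of an infinite filiform Lie algebra L are zero for all but finitely many pairs (j, s). Then λ_{js} = 0 for all j > 1; equivalently, [L, L] is abelian. -/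
section Aux
set_option linter.unusedSectionVars false
variable {K : Type*} [Field K] [CharZero K]
variable {L : Type*} [LieRing L] [LieAlgebra K L]

lemma lie_fsum (x : L) (f : ℕ →₀ K) (v : ℕ → L) :
    ⁅x, f.sum fun s c => c • v s⁆ = f.sum fun s c => c • ⁅x, v s⁆ := by
  rw [show (⁅x, f.sum fun s c => c • v s⁆) = (LieAlgebra.ad K L x) (f.sum fun s c => c • v s)
      from rfl, map_finsuppSum]
  simp [LieAlgebra.ad_apply]

lemma fsum_lie (y : L) (f : ℕ →₀ K) (v : ℕ → L) :
    ⁅f.sum fun s c => c • v s, y⁆ = f.sum fun s c => c • ⁅v s, y⁆ := by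
  rw [← lie_skew, lie_fsum, ← Finsupp.sum_neg]
  apply Finsupp.sum_congr
  intro s _
  rw [← smul_neg, ← lie_skew, neg_neg]

lemma brzero (B : Module.Basis ℕ K L) (lam : ℕ → (ℕ →₀ K)) (N : ℕ)
    (ha : ∀ j, 1 ≤ j → ⁅B 0, B j⁆ = B (j + 1))
    (he : ∀ j, 1 ≤ j → ⁅B j, B (j + 1)⁆ = (lam j).sum fun s c => c • B (2 * j + 1 + s))
    (htop : ∀ j, N < j → lam j = 0) :
    ∀ i j, N < i → N < j → ⁅B i, B j⁆ = 0 := by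
  have A : ∀ d j, N < j → ⁅B j, B (j + d)⁆ = 0 := by
    intro d
    induction d using Nat.strong_induction_on with
    | _ d ih =>
      intro j hj
      match d with
      | 0 => simp
      | 1 => rw [he j (by omega), htop j (by omega), Finsupp.sum_zero_index]
      | (m+2) =>
        have h1 : ⁅B j, B (j + (m + 1))⁆ = 0 := ih (m + 1) (by omega) j hj
        have h2 : ⁅B (j + 1), B (j + (m + 1))⁆ = 0 := by
          have := ih m (by omega) (j + 1) (by omega)
          rwa [show j + 1 + m = j + (m + 1) from by omega] at this
        have hlz := leibniz_lie (B 0) (B j) (B (j + (m + 1)))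
        rw [h1, lie_zero, ha j (by omega), ha (j + (m + 1)) (by omega), h2, zero_add,
          show j + (m + 1) + 1 = j + (m + 2) from by omega] at hlz
        exact hlz.symm
  intro i j hi hj
  rcases le_or_gt i j with h | h
  · obtain ⟨d, rfl⟩ := Nat.exists_eq_add_of_le h
    exact A d i hi
  · obtain ⟨d, rfl⟩ := Nat.exists_eq_add_of_le h.le
    rw [← neg_eq_zero, lie_skew]
    exact A d j hj

lemma brN (B : Module.Basis ℕ K L) (lam : ℕ → (ℕ →₀ K)) (M : ℕ) (hM : 1 ≤ M)
    (ha : ∀ j, 1 ≤ j → ⁅B 0, B j⁆ = B (j + 1))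
    (he : ∀ j, 1 ≤ j → ⁅B j, B (j + 1)⁆ = (lam j).sum fun s c => c • B (2 * j + 1 + s))
    (htop : ∀ j, M + 1 < j → lam j = 0) :
    ∀ d, ⁅B (M + 1), B (M + 2 + d)⁆ = (lam (M + 1)).sum fun s c => c • B (2 * M + 3 + d + s) := by
  intro d
  induction d with
  | zero =>
    have := he (M + 1) (by omega)
    rw [show M + 1 + 1 = M + 2 from rfl] at this
    rw [this]
    apply Finsupp.sum_congr
    intro s _
    rw [show 2 * (M + 1) + 1 + s = 2 * M + 3 + 0 + s from by omega]
  | succ d ihd =>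
    have hz : ⁅B (M + 2), B (M + 2 + d)⁆ = 0 :=
      brzero B lam (M + 1) ha he htop (M + 2) (M + 2 + d) (by omega) (by omega)
    have hlz := leibniz_lie (B 0) (B (M + 1)) (B (M + 2 + d))
    rw [ihd, ha (M + 1) (by omega), ha (M + 2 + d) (by omega), hz, zero_add,
      lie_fsum] at hlz
    rw [show M + 2 + (d + 1) = M + 2 + d + 1 from by omega, ← hlz]
    apply Finsupp.sum_congr
    intro s _
    rw [ha (2 * M + 3 + d + s) (by omega),
      show 2 * M + 3 + d + s + 1 = 2 * M + 3 + (d + 1) + s from by omega]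

lemma brM (B : Module.Basis ℕ K L) (lam : ℕ → (ℕ →₀ K)) (M : ℕ) (hM : 1 ≤ M)
    (ha : ∀ j, 1 ≤ j → ⁅B 0, B j⁆ = B (j + 1))
    (he : ∀ j, 1 ≤ j → ⁅B j, B (j + 1)⁆ = (lam j).sum fun s c => c • B (2 * j + 1 + s))
    (htop : ∀ j, M + 1 < j → lam j = 0) :
    ∀ d, ⁅B M, B (M + 2 + d)⁆ =
      ((lam M).sum fun s c => c • B (2 * M + 2 + d + s))
        - (d : K) • ((lam (M + 1)).sum fun s c => c • B (2 * M + 2 + d + s)) := by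
  intro d
  induction d with
  | zero =>
    have hlz := leibniz_lie (B 0) (B M) (B (M + 1))
    rw [he M (by omega), ha M (by omega), ha (M + 1) (by omega), lie_self, zero_add,
      lie_fsum] at hlz
    rw [show M + 2 + 0 = M + 1 + 1 from by omega, ← hlz]
    simp only [Nat.cast_zero, zero_smul, sub_zero]
    apply Finsupp.sum_congr
    intro s _
    rw [ha (2 * M + 1 + s) (by omega),
      show 2 * M + 1 + s + 1 = 2 * M + 2 + 0 + s from by omega]
  | succ d ihd =>
    have hlz := leibniz_lie (B 0) (B M) (B (M + 2 + d))
    rw [ihd, ha M (by omega), ha (M + 2 + d) (by omega),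
      brN B lam M hM ha he htop d] at hlz
    rw [lie_sub, lie_smul, lie_fsum, lie_fsum] at hlz
    -- hlz : shift(lamM) - d • shift(lamN) = lamN-sum + ⁅B M, B (M+2+d+1)⁆
    have e1 : ((lam M).sum fun s c => c • ⁅B 0, B (2 * M + 2 + d + s)⁆)
        = (lam M).sum fun s c => c • B (2 * M + 2 + (d+1) + s) := by
      apply Finsupp.sum_congr
      intro s _
      rw [ha (2 * M + 2 + d + s) (by omega),
        show 2 * M + 2 + d + s + 1 = 2 * M + 2 + (d + 1) + s from by omega]
    have e2 : ((lam (M + 1)).sum fun s c => c • ⁅B 0, B (2 * M + 2 + d + s)⁆)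
        = (lam (M + 1)).sum fun s c => c • B (2 * M + 2 + (d + 1) + s) := by
      apply Finsupp.sum_congr
      intro s _
      rw [ha (2 * M + 2 + d + s) (by omega),
        show 2 * M + 2 + d + s + 1 = 2 * M + 2 + (d + 1) + s from by omega]
    have e3 : ((lam (M + 1)).sum fun s c => c • B (2 * M + 3 + d + s))
        = (lam (M + 1)).sum fun s c => c • B (2 * M + 2 + (d + 1) + s) := by
      apply Finsupp.sum_congr
      intro s _
      rw [show 2 * M + 3 + d + s = 2 * M + 2 + (d + 1) + s from by omega]
    rw [e1, e2, e3] at hlz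
    rw [show M + 2 + (d + 1) = M + 2 + d + 1 from by omega]
    rw [eq_sub_of_add_eq' hlz.symm]
    push_cast
    rw [add_smul, one_smul]
    abel


lemma keyfalse (B : Module.Basis ℕ K L) (lam : ℕ → (ℕ →₀ K)) (M : ℕ) (hM : 1 ≤ M)
    (ha : ∀ j, 1 ≤ j → ⁅B 0, B j⁆ = B (j + 1))
    (he : ∀ j, 1 ≤ j → ⁅B j, B (j + 1)⁆ = (lam j).sum fun s c => c • B (2 * j + 1 + s))
    (htop : ∀ j, M + 1 < j → lam j = 0)
    (hne : lam (M + 1) ≠ 0) : False := by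
  set g := lam (M + 1) with hg
  have hlz := leibniz_lie (B M) (B (M + 1)) (B (M + 2))
  -- rewrite ⁅B (M+1), B (M+2)⁆
  have h1 : ⁅B (M + 1), B (M + 2)⁆ = g.sum fun s c => c • B (2 * M + 3 + s) := by
    have := brN B lam M hM ha he htop 0
    rwa [show M + 2 + 0 = M + 2 from rfl] at this
  -- LHS
  have hL : ⁅B M, ⁅B (M + 1), B (M + 2)⁆⁆ =
      (g.sum fun s c => c • ((lam M).sum fun t c' => c' • B (3 * M + 3 + s + t)))
        - g.sum fun s c => (((M : K) + 1 + s) * c) •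
            (g.sum fun t c' => c' • B (3 * M + 3 + s + t)) := by
    rw [h1, lie_fsum, ← Finsupp.sum_sub]
    apply Finsupp.sum_congr
    intro s _
    have := brM B lam M hM ha he htop (M + 1 + s)
    rw [show M + 2 + (M + 1 + s) = 2 * M + 3 + s from by omega] at this
    rw [this, smul_sub]
    congr 1
    · apply congrArg
      apply Finsupp.sum_congr
      intro t _
      rw [show 2 * M + 2 + (M + 1 + s) + t = 3 * M + 3 + s + t from by omega]
    · rw [smul_smul, ← hg]
      congr 1
      · push_cast; ring
      · apply Finsupp.sum_congr
        intro t _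
        rw [show 2 * M + 2 + (M + 1 + s) + t = 3 * M + 3 + s + t from by omega]
  -- RHS first term is zero
  have hR1 : ⁅⁅B M, B (M + 1)⁆, B (M + 2)⁆ = 0 := by
    rw [he M (by omega), fsum_lie]
    rw [← show ((lam M).sum fun _ _ => (0 : L)) = 0 from by simp [Finsupp.sum]]
    apply Finsupp.sum_congr
    intro t _
    rw [brzero B lam (M + 1) ha he htop (2 * M + 1 + t) (M + 2) (by omega) (by omega), smul_zero]
  -- RHS second term
  have hR2 : ⁅B (M + 1), ⁅B M, B (M + 2)⁆⁆ =
      (lam M).sum fun t c => c • (g.sum fun s c' => c' • B (3 * M + 3 + t + s)) := by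
    have h0 : ⁅B M, B (M + 2)⁆ = (lam M).sum fun t c => c • B (2 * M + 2 + t) := by
      have := brM B lam M hM ha he htop 0
      rwa [show M + 2 + 0 = M + 2 from rfl, Nat.cast_zero, zero_smul, sub_zero,
        show (fun s c => c • B (2 * M + 2 + 0 + s)) = fun s c => c • B (2 * M + 2 + s)
          from by funext s c; rw [show 2 * M + 2 + 0 + s = 2 * M + 2 + s from by omega]] at this
    rw [h0, lie_fsum]
    apply Finsupp.sum_congr
    intro t _
    have := brN B lam M hM ha he htop (M + t)
    rw [show M + 2 + (M + t) = 2 * M + 2 + t from by omega] at this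
    rw [this]
    apply congrArg
    apply Finsupp.sum_congr
    intro s _
    rw [show 2 * M + 3 + (M + t) + s = 3 * M + 3 + t + s from by omega]
  rw [hL, hR1, hR2, zero_add] at hlz
  -- swap summation order in the RHS of hlz
  have hswap : ((lam M).sum fun t c => c • (g.sum fun s c' => c' • B (3 * M + 3 + t + s)))
      = g.sum fun s c => c • ((lam M).sum fun t c' => c' • B (3 * M + 3 + s + t)) := by
    simp only [Finsupp.smul_sum, smul_smul]
    rw [Finsupp.sum_comm]
    apply Finsupp.sum_congr
    intro s _
    apply Finsupp.sum_congr
    intro t _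
    rw [mul_comm, show 3 * M + 3 + t + s = 3 * M + 3 + s + t from by omega]
  rw [hswap] at hlz
  have hT2 : (g.sum fun s c => (((M : K) + 1 + s) * c) •
      (g.sum fun t c' => c' • B (3 * M + 3 + s + t))) = 0 := sub_eq_self.mp hlz
  -- extract the coefficient at index 3*M+3+(S+S)
  have hsupp : g.support.Nonempty := Finsupp.support_nonempty_iff.mpr hne
  set S := g.support.max' hsupp with hS
  have hSmem : S ∈ g.support := g.support.max'_mem hsupp
  have hSle : ∀ s ∈ g.support, s ≤ S := fun s hs => Finset.le_max' _ s hs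
  have E2 := congrArg (fun x => B.repr x (3 * M + 3 + (S + S))) hT2
  simp only [map_finsuppSum, map_smul, Module.Basis.repr_self, Finsupp.sum_apply,
    Finsupp.smul_apply, Finsupp.single_apply, smul_eq_mul, map_zero, Finsupp.coe_zero,
    Pi.zero_apply] at E2
  have hside : ∀ s ∈ g.support, s ≠ S →
      ((M : K) + 1 + s) * g s *
        (g.sum fun t c' => c' * if 3 * M + 3 + s + t = 3 * M + 3 + (S + S) then (1:K) else 0) = 0 := by
    intro s hs hsne
    have hz : (g.sum fun t c' => c' * if 3 * M + 3 + s + t = 3 * M + 3 + (S + S) then (1:K) else 0) = 0 := by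
      rw [Finsupp.sum]
      apply Finset.sum_eq_zero
      intro t ht
      have h1 := hSle s hs
      have h2 := hSle t ht
      rw [if_neg (by omega), mul_zero]
    rw [hz, mul_zero]
  rw [Finsupp.sum, Finset.sum_eq_single_of_mem S hSmem hside] at E2
  have hz2 : (g.sum fun t c' => c' * if 3 * M + 3 + S + t = 3 * M + 3 + (S + S) then (1:K) else 0) = g S := by
    rw [Finsupp.sum]
    rw [Finset.sum_eq_single_of_mem S hSmem ?_]
    · rw [if_pos (by omega), mul_one]
    · intro t ht htne
      rw [if_neg (by have := hSle t ht; omega), mul_zero]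
  rw [hz2] at E2
  have hgS : g S ≠ 0 := Finsupp.mem_support_iff.mp hSmem
  have hMS : ((M : K) + 1 + S) ≠ 0 := by
    have : ((M : K) + 1 + S) = ((M + 1 + S : ℕ) : K) := by push_cast; ring
    rw [this, Nat.cast_ne_zero]
    omega
  exact (mul_ne_zero (mul_ne_zero hMS hgS) hgS) E2

end Aux

/-- Suppose the structure constants `(λ_{js})` of an infinite filiform Lie
algebra `L` (basis `B` with `B 0 = a`, `B j = eⱼ`, `[a, eⱼ] = e_{j+1}`,
`[eⱼ, e_{j+1}] = Σ_{s ≥ 1} λ_{js} e_{2j+1+s}`) are zero for all but finitely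
many pairs `(j, s)`.  Then `λ_{js} = 0` for all `j > 1`; equivalently,
`[L, L] = span {e₂, e₃, ...}` is abelian. -/
theorem filiform_finitely_many_constants (K : Type*) [Field K] [CharZero K]
    (L : Type*) [LieRing L] [LieAlgebra K L] (B : Module.Basis ℕ K L)
    (lam : ℕ → (ℕ →₀ K)) (hlam0 : ∀ j, lam j 0 = 0)
    (hfin : {p : ℕ × ℕ | lam p.1 p.2 ≠ 0}.Finite)
    (ha : ∀ j, 1 ≤ j → ⁅B 0, B j⁆ = B (j + 1))
    (he : ∀ j, 1 ≤ j → ⁅B j, B (j + 1)⁆ = (lam j).sum fun s c => c • B (2 * j + 1 + s)) :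
    (∀ j, 1 < j → lam j = 0) ∧
    (∀ x ∈ LieAlgebra.derivedSeries K L 1, ∀ y ∈ LieAlgebra.derivedSeries K L 1,
      ⁅x, y⁆ = 0) := by
  have key : ∀ j, 1 < j → lam j = 0 := by
    by_contra hcon
    push_neg at hcon
    obtain ⟨j0, hj0, hj0ne⟩ := hcon
    have hSfin : {j | 1 < j ∧ lam j ≠ 0}.Finite := by
      apply (hfin.image Prod.fst).subset
      intro j hj
      obtain ⟨s, hs⟩ := Finsupp.ne_iff.mp hj.2
      exact ⟨(j, s), hs, rfl⟩
    obtain ⟨N, hN1, hNne, htop⟩ :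
        ∃ N, 1 < N ∧ lam N ≠ 0 ∧ ∀ j, N < j → lam j = 0 := by
      set T := hSfin.toFinset with hT
      have hTne : T.Nonempty := ⟨j0, by rw [hT, Set.Finite.mem_toFinset]; exact ⟨hj0, hj0ne⟩⟩
      obtain ⟨hN1, hNne⟩ : 1 < T.max' hTne ∧ lam (T.max' hTne) ≠ 0 := by
        have := T.max'_mem hTne
        exact (Set.Finite.mem_toFinset hSfin).mp this
      refine ⟨T.max' hTne, hN1, hNne, ?_⟩
      intro j hj
      by_contra hne
      have hjT : j ∈ T := by rw [hT, Set.Finite.mem_toFinset]; exact ⟨by omega, hne⟩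
      have := Finset.le_max' T j hjT
      omega
    obtain ⟨M, rfl⟩ : ∃ M, N = M + 1 := ⟨N - 1, by omega⟩
    exact keyfalse B lam M (by omega) ha he htop hNne
  refine ⟨key, ?_⟩
  set V : Submodule K L := Submodule.span K (Set.range fun j => B (j + 2)) with hV
  have hmemV : ∀ j, 2 ≤ j → B j ∈ V := by
    intro j hj
    apply Submodule.subset_span
    have h2 : j - 2 + 2 = j := by omega
    exact ⟨j - 2, by simp only []; rw [h2]⟩
  have F1 : ∀ i j, 1 < i → 1 < j → ⁅B i, B j⁆ = 0 :=
    brzero B lam 1 ha he (fun j hj => key j hj)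
  have hadV : ∀ x ∈ V, ⁅B 0, x⁆ ∈ V := by
    intro x hx
    induction hx using Submodule.span_induction with
    | mem x h =>
      obtain ⟨j, rfl⟩ := h
      rw [ha (j + 2) (by omega)]
      exact hmemV _ (by omega)
    | zero => rw [lie_zero]; exact V.zero_mem
    | add x y hx hy ihx ihy => rw [lie_add]; exact V.add_mem ihx ihy
    | smul a x hx ihx => rw [lie_smul]; exact V.smul_mem a ihx
  have F2' : ∀ d, ⁅B 1, B (2 + d)⁆ ∈ V := by
    intro d
    induction d with
    | zero =>
      rw [show (2 : ℕ) + 0 = 1 + 1 from rfl, he 1 (by omega), Finsupp.sum]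
      exact V.sum_mem fun s hs => V.smul_mem _ (hmemV _ (by omega))
    | succ d ihd =>
      have hlz := leibniz_lie (B 0) (B 1) (B (2 + d))
      rw [ha 1 (by omega), ha (2 + d) (by omega), F1 2 (2 + d) (by omega) (by omega),
        zero_add, show 2 + d + 1 = 2 + (d + 1) from by omega] at hlz
      rw [← hlz]
      exact hadV _ ihd
  have F2 : ∀ k, ⁅B 1, B k⁆ ∈ V := by
    intro k
    match k with
    | 0 =>
      rw [show ⁅B 1, B 0⁆ = -⁅B 0, B 1⁆ from (lie_skew _ _).symm, ha 1 (by omega)]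
      exact V.neg_mem (hmemV 2 (by omega))
    | 1 => rw [lie_self]; exact V.zero_mem
    | (m + 2) =>
      have := F2' m
      rwa [show 2 + m = m + 2 from by omega] at this
  have F3 : ∀ i j, ⁅B i, B j⁆ ∈ V := by
    intro i j
    by_cases hi0 : i = 0
    · subst hi0
      by_cases hj0 : j = 0
      · subst hj0; rw [lie_self]; exact V.zero_mem
      · rw [ha j (by omega)]; exact hmemV _ (by omega)
    by_cases hj0 : j = 0
    · subst hj0
      rw [show ⁅B i, B 0⁆ = -⁅B 0, B i⁆ from (lie_skew _ _).symm, ha i (by omega)]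
      exact V.neg_mem (hmemV _ (by omega))
    by_cases hi1 : i = 1
    · subst hi1; exact F2 j
    by_cases hj1 : j = 1
    · subst hj1
      rw [show ⁅B i, B 1⁆ = -⁅B 1, B i⁆ from (lie_skew _ _).symm]
      exact V.neg_mem (F2 i)
    · rw [F1 i j (by omega) (by omega)]; exact V.zero_mem
  have F4' : ∀ (i : ℕ) (y : L), ⁅B i, y⁆ ∈ V := by
    intro i y
    have hy : y ∈ Submodule.span K (Set.range ⇑B) := by rw [B.span_eq]; trivial
    induction hy using Submodule.span_induction with
    | mem y h => obtain ⟨j, rfl⟩ := h; exact F3 i j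
    | zero => rw [lie_zero]; exact V.zero_mem
    | add x y hx hy ihx ihy => rw [lie_add]; exact V.add_mem ihx ihy
    | smul a x hx ihx => rw [lie_smul]; exact V.smul_mem a ihx
  have F4 : ∀ x y : L, ⁅x, y⁆ ∈ V := by
    intro x y
    have hx : x ∈ Submodule.span K (Set.range ⇑B) := by rw [B.span_eq]; trivial
    induction hx using Submodule.span_induction with
    | mem x h => obtain ⟨i, rfl⟩ := h; exact F4' i y
    | zero => rw [zero_lie]; exact V.zero_mem
    | add x x' hx hx' ihx ihx' => rw [add_lie]; exact V.add_mem ihx ihx'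
    | smul a x hx ihx => rw [smul_lie]; exact V.smul_mem a ihx
  have hDV : ∀ x ∈ LieAlgebra.derivedSeries K L 1, x ∈ V := by
    intro x hx
    have hx' : x ∈ ⁅(⊤ : LieIdeal K L), (⊤ : LieIdeal K L)⁆ := by
      rwa [LieAlgebra.derivedSeries_def, LieAlgebra.derivedSeriesOfIdeal_succ,
        LieAlgebra.derivedSeriesOfIdeal_zero] at hx
    have hx'' : x ∈ Submodule.span K
        {m : L | ∃ u ∈ (⊤ : LieIdeal K L), ∃ v ∈ (⊤ : LieIdeal K L), ⁅u, v⁆ = m} := by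
      rw [← LieSubmodule.lieIdeal_oper_eq_linear_span']
      exact hx'
    refine Submodule.span_le.mpr ?_ hx''
    rintro z ⟨u, -, v, -, rfl⟩
    exact F4 u v
  have G1 : ∀ i, 1 < i → ∀ y ∈ V, ⁅B i, y⁆ = 0 := by
    intro i hi y hy
    induction hy using Submodule.span_induction with
    | mem y h => obtain ⟨j, rfl⟩ := h; exact F1 i (j + 2) hi (by omega)
    | zero => rw [lie_zero]
    | add x y hx hy ihx ihy => rw [lie_add, ihx, ihy, add_zero]
    | smul a x hx ihx => rw [lie_smul, ihx, smul_zero]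
  have G : ∀ x ∈ V, ∀ y ∈ V, ⁅x, y⁆ = 0 := by
    intro x hx
    induction hx using Submodule.span_induction with
    | mem x h =>
      obtain ⟨j, rfl⟩ := h
      intro y hy
      exact G1 (j + 2) (by omega) y hy
    | zero => intro y hy; rw [zero_lie]
    | add x x' hx hx' ihx ihx' => intro y hy; rw [add_lie, ihx y hy, ihx' y hy, add_zero]
    | smul a x hx ihx => intro y hy; rw [smul_lie, ihx y hy, smul_zero]
  intro x hx y hy
  exact G x (hDV x hx) y (hDV y hy)
end

section
/- Let L be an infinite filiform Lie algebra such that [L, L] is abelian. Then L is isomorphic to L_{(λ)} for some sequence (λ) = (λ_s)_{s≥1}; specifically, writing [e₁, e₂] = Σ_{s≥1} λ_s e_{3+s}, one has [e₁, eᵢ] = Σ_{s≥1} λ_s e_{1+i+s} for all i ≥ 2 and [eᵢ, eⱼ] = 0 for i, j ≥ 2. -/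
/-- Let `L` be an infinite filiform Lie algebra (basis `B` with `B 0 = a`,
`B i = eᵢ`, `[a, eᵢ] = e_{i+1}`, `[eᵢ, eⱼ] ∈ span {e_k : k ≥ i+j+1}`) such
that `[L, L]` is abelian.  Then `L` is of the form `L_(λ)`: writing
`[e₁, e₂] = Σ_{s ≥ 1} λ_s e_{3+s}`, one has
`[e₁, eᵢ] = Σ_{s ≥ 1} λ_s e_{1+i+s}` for all `i ≥ 2`, and `[eᵢ, eⱼ] = 0` for
`i, j ≥ 2`. -/
theorem filiform_metabelian_is_Llam (K : Type*) [Field K] [CharZero K]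
    (L : Type*) [LieRing L] [LieAlgebra K L] (B : Module.Basis ℕ K L)
    (ha : ∀ i, 1 ≤ i → ⁅B 0, B i⁆ = B (i + 1))
    (hfil : ∀ i, 1 ≤ i → ∀ j, 1 ≤ j →
      ⁅B i, B j⁆ ∈ Submodule.span K {x : L | ∃ t, i + j + 1 ≤ t ∧ x = B t})
    (hab : ∀ x ∈ LieAlgebra.derivedSeries K L 1,
           ∀ y ∈ LieAlgebra.derivedSeries K L 1, ⁅x, y⁆ = 0) :
    ∃ lam : ℕ →₀ K, lam 0 = 0 ∧
      ⁅B 1, B 2⁆ = (lam.sum fun s c => c • B (3 + s)) ∧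
      (∀ i, 2 ≤ i → ⁅B 1, B i⁆ = lam.sum fun s c => c • B (1 + i + s)) ∧
      (∀ i, 2 ≤ i → ∀ j, 2 ≤ j → ⁅B i, B j⁆ = 0) := by
  -- e_i ∈ [L,L] for i ≥ 2
  have hmem : ∀ i, 2 ≤ i → B i ∈ LieAlgebra.derivedSeries K L 1 := by
    intro i hi
    obtain ⟨j, rfl⟩ : ∃ j, i = j + 1 := ⟨i - 1, by omega⟩
    rw [← ha j (by omega)]
    rw [LieAlgebra.derivedSeries_def, LieAlgebra.derivedSeriesOfIdeal_succ,
      LieAlgebra.derivedSeriesOfIdeal_zero]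
    exact LieSubmodule.lie_mem_lie (LieSubmodule.mem_top _) (LieSubmodule.mem_top _)
  have hzero : ∀ i, 2 ≤ i → ∀ j, 2 ≤ j → ⁅B i, B j⁆ = 0 := fun i hi j hj =>
    hab _ (hmem i hi) _ (hmem j hj)
  -- coefficients of [e₁, e₂]
  set c : ℕ →₀ K := B.repr ⁅B 1, B 2⁆ with hc
  have hsupp : ∀ t ∈ c.support, 4 ≤ t := by
    have h := hfil 1 le_rfl 2 (by omega)
    have hset : {x : L | ∃ t, 1 + 2 + 1 ≤ t ∧ x = B t} = B '' {t | 4 ≤ t} := by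
      ext x; constructor
      · rintro ⟨t, ht, rfl⟩
        exact ⟨t, show (4:ℕ) ≤ t by omega, rfl⟩
      · rintro ⟨t, ht, rfl⟩
        simp only [Set.mem_setOf_eq] at ht
        exact ⟨t, by omega, rfl⟩
    rw [hset, Module.Basis.mem_span_image] at h
    intro t ht
    exact h ht
  have hinj : Set.InjOn (fun s => 3 + s) ((fun s => 3 + s) ⁻¹' ↑c.support) := by
    intro x _ y _ h
    simpa using h
  have hbij : Set.BijOn (fun s => 3 + s) ((fun s => 3 + s) ⁻¹' ↑c.support) ↑c.support := by
    refine ⟨fun x hx => hx, hinj, fun t ht => ?_⟩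
    have h4 : 4 ≤ t := hsupp t ht
    refine ⟨t - 3, ?_, show 3 + (t - 3) = t by omega⟩
    simp only [Set.mem_preimage, Finset.coe_sort_coe]
    have he : 3 + (t - 3) = t := by omega
    rw [he]; exact ht
  have hbase : ⁅B 1, B 2⁆ =
      (Finsupp.comapDomain (fun s => 3 + s) c hinj).sum fun s a => a • B (3 + s) := by
    conv_lhs => rw [← B.linearCombination_repr ⁅B 1, B 2⁆]
    rw [Finsupp.linearCombination_apply, ← hc]
    exact (Finsupp.sum_comapDomain (fun s => 3 + s) c (fun t a => a • B t) hbij).symm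
  refine ⟨Finsupp.comapDomain (fun s => 3 + s) c hinj, ?_, hbase, ?_, hzero⟩
  · simp only [Finsupp.comapDomain_apply]
    by_contra h
    exact absurd (hsupp 3 (Finsupp.mem_support_iff.2 h)) (by norm_num)
  · -- induction
    intro i hi
    induction i with
    | zero => omega
    | succ n ih =>
      rcases Nat.lt_or_ge n 2 with hn | hn
      · -- n + 1 = 2, i.e. n = 1
        have hn1 : n = 1 := by omega
        subst hn1
        rw [hbase]
      · have hstep : ⁅B 1, B (n + 1)⁆ = ⁅B 0, ⁅B 1, B n⁆⁆ := by
          have := leibniz_lie (B 0) (B 1) (B n)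
          rw [ha 1 le_rfl, ha n (by omega), hzero 2 le_rfl n hn] at this
          rw [this, zero_add]
        rw [hstep, ih hn]
        have had : ∀ y : L, ⁅B 0, y⁆ = LieAlgebra.ad K L (B 0) y := fun y => rfl
        rw [had, map_finsuppSum]
        refine Finsupp.sum_congr fun s _ => ?_
        rw [map_smul, LieAlgebra.ad_apply, ha (1 + n + s) (by omega)]
        congr 2
        omega
end

section
/- Let φ be the linear map of L_{(λ)} determined by φ(a) = a, φ(e₁) = e₁ + d·e_k for some scalar d and k ≥ 2, and extended by φ(e_{i+1}) = [φ(a), φ(eᵢ)]. Then φ(eᵢ) = eᵢ + d·e_{k+i-1} for all i ≥ 1, and [φ(e₁), φ(e₂)] = Σ_{i≥1} λᵢ φ(e_{3+i}); hence the change of basis by φ does not alter the structure sequence (λ). -/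
/-- Let `φ` be the linear map of `L_(λ)` (basis `B` with `B 0 = a`,
`B i = eᵢ`) determined by `φ(a) = a`, `φ(e₁) = e₁ + d e_k` for some scalar `d`
and `k ≥ 2`, extended by `φ(e_{i+1}) = [φ(a), φ(eᵢ)]`.  Then
`φ(eᵢ) = eᵢ + d e_{k+i-1}` for all `i ≥ 1`, and
`[φ(e₁), φ(e₂)] = Σ_{i ≥ 1} λᵢ φ(e_{3+i})`; hence this change of basis does
not alter the structure sequence `(λ)`. -/
theorem Llam_sigma_automorphism (K : Type*) [Field K] [CharZero K]
    (L : Type*) [LieRing L] [LieAlgebra K L] (B : Module.Basis ℕ K L)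
    (lam : ℕ →₀ K) (hlam0 : lam 0 = 0)
    (ha : ∀ i, 1 ≤ i → ⁅B 0, B i⁆ = B (i + 1))
    (h1 : ∀ i, 2 ≤ i → ⁅B 1, B i⁆ = lam.sum fun j c => c • B (1 + i + j))
    (h2 : ∀ i, 2 ≤ i → ∀ j, 2 ≤ j → ⁅B i, B j⁆ = 0)
    (d : K) (k : ℕ) (hk : 2 ≤ k)
    (φ : L →ₗ[K] L)
    (hφa : φ (B 0) = B 0)
    (hφ1 : φ (B 1) = B 1 + d • B k)
    (hφrec : ∀ i, 1 ≤ i → φ (B (i + 1)) = ⁅φ (B 0), φ (B i)⁆) :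
    (∀ i, 1 ≤ i → φ (B i) = B i + d • B (k + i - 1)) ∧
    ⁅φ (B 1), φ (B 2)⁆ = lam.sum fun i c => c • φ (B (3 + i)) := by
  have main : ∀ i, 1 ≤ i → φ (B i) = B i + d • B (k + i - 1) := by
    intro i hi
    induction i with
    | zero => omega
    | succ n ih =>
      rcases Nat.lt_or_ge n 1 with h | hn
      · obtain rfl : n = 0 := by omega
        rw [hφ1]
        simp
      · rw [hφrec n hn, hφa, ih hn, lie_add, lie_smul,
          ha n hn, ha (k + n - 1) (by omega)]
        have : k + n - 1 + 1 = k + (n + 1) - 1 := by omega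
        rw [this]
  refine ⟨main, ?_⟩
  have e1 := main 1 le_rfl
  have e2 := main 2 (by norm_num)
  have hk1 : k + 1 - 1 = k := by omega
  have hk2 : k + 2 - 1 = k + 1 := by omega
  rw [hk1] at e1
  rw [hk2] at e2
  rw [e1, e2, add_lie, lie_add, lie_add, smul_lie, lie_smul, lie_smul, smul_lie,
    h1 2 le_rfl, h1 (k + 1) (by omega), h2 k hk 2 le_rfl, h2 k hk (k + 1) (by omega)]
  rw [Finsupp.smul_sum, Finsupp.sum, Finsupp.sum, Finsupp.sum]
  simp only [smul_smul, smul_zero, add_zero]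
  rw [← Finset.sum_add_distrib]
  refine Finset.sum_congr rfl fun j hj => ?_
  have := main (3 + j) (by omega)
  have h3 : (1:ℕ) + 2 + j = 3 + j := by omega
  have h4 : 1 + (k + 1) + j = k + (3 + j) - 1 := by omega
  rw [this, smul_add, smul_smul, mul_comm d, h3, h4]
end

section
/- Let φ be the linear map of L_{(λ)} determined by φ(a) = a + c·e_k for some scalar c and k ≥ 2, φ(e₁) = e₁, and extended by φ(e_{i+1}) = [φ(a), φ(eᵢ)]. Then φ(eⱼ) = eⱼ − c·Σ_{r≥1} λ_r e_{k+j-1+r} for all j ≥ 2, and [φ(e₁), φ(e₂)] = Σ_{i≥1} λᵢ φ(e_{3+i}); hence this change of basis does not alter the structure sequence (λ). -/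
lemma lie_finsupp_sum {K L : Type*} [Field K] [LieRing L] [LieAlgebra K L]
    (x : L) (f : ℕ →₀ K) (g : ℕ → K → L) :
    ⁅x, f.sum g⁆ = f.sum fun a b => ⁅x, g a b⁆ := by
  exact map_sum (AddMonoidHom.mk' (fun y => ⁅x, y⁆) (lie_add x)) _ _

lemma sum_index_congr {K L : Type*} [Field K] [AddCommGroup L] [Module K L]
    (B : ℕ → L) (f : ℕ →₀ K) {m n : ℕ} (h : m = n) :
    (f.sum fun r cr => cr • B (m + r)) = f.sum fun r cr => cr • B (n + r) := by
  subst h; rfl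

/-- Let `φ` be the linear map of `L_(λ)` (basis `B` with `B 0 = a`,
`B i = eᵢ`) determined by `φ(a) = a + c e_k` for some scalar `c` and `k ≥ 2`,
`φ(e₁) = e₁`, extended by `φ(e_{i+1}) = [φ(a), φ(eᵢ)]`.  Then
`φ(eⱼ) = eⱼ − c Σ_{r ≥ 1} λ_r e_{k+j-1+r}` for all `j ≥ 2`, and
`[φ(e₁), φ(e₂)] = Σ_{i ≥ 1} λᵢ φ(e_{3+i})`; hence this change of basis does
not alter the structure sequence `(λ)`. -/
theorem Llam_tau_automorphism (K : Type*) [Field K] [CharZero K]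
    (L : Type*) [LieRing L] [LieAlgebra K L] (B : Module.Basis ℕ K L)
    (lam : ℕ →₀ K) (hlam0 : lam 0 = 0)
    (ha : ∀ i, 1 ≤ i → ⁅B 0, B i⁆ = B (i + 1))
    (h1 : ∀ i, 2 ≤ i → ⁅B 1, B i⁆ = lam.sum fun j cj => cj • B (1 + i + j))
    (h2 : ∀ i, 2 ≤ i → ∀ j, 2 ≤ j → ⁅B i, B j⁆ = 0)
    (c : K) (k : ℕ) (hk : 2 ≤ k)
    (φ : L →ₗ[K] L)
    (hφa : φ (B 0) = B 0 + c • B k)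
    (hφ1 : φ (B 1) = B 1)
    (hφrec : ∀ i, 1 ≤ i → φ (B (i + 1)) = ⁅φ (B 0), φ (B i)⁆) :
    (∀ j, 2 ≤ j → φ (B j) = B j - c • (lam.sum fun r cr => cr • B (k + j - 1 + r))) ∧
    ⁅φ (B 1), φ (B 2)⁆ = lam.sum fun i ci => ci • φ (B (3 + i)) := by
  have key : ∀ j, 2 ≤ j →
      φ (B j) = B j - c • (lam.sum fun r cr => cr • B (k + j - 1 + r)) := by
    intro j hj
    induction j, hj using Nat.le_induction with
    | base =>
      have h := hφrec 1 le_rfl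
      rw [hφa, hφ1, add_lie, smul_lie, ha 1 le_rfl, ← lie_skew, h1 k hk] at h
      rw [show (1 + 1 : ℕ) = 2 from rfl] at h
      rw [h, smul_neg, ← sub_eq_add_neg]
      congr 2
      exact sum_index_congr (fun n => B n) lam (show 1 + k = k + 2 - 1 by omega)
    | succ j hj ih =>
      have h := hφrec j (by omega)
      rw [hφa, ih] at h
      have S0 : ⁅B 0, lam.sum fun r cr => cr • B (k + j - 1 + r)⁆ =
          lam.sum fun r cr => cr • B (k + j + r) := by
        rw [lie_finsupp_sum]
        refine Finsupp.sum_congr fun r _ => ?_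
        rw [lie_smul, ha (k + j - 1 + r) (by omega)]
        congr 2
        omega
      have Sk : ⁅B k, lam.sum fun r cr => cr • B (k + j - 1 + r)⁆ = 0 := by
        rw [lie_finsupp_sum, Finsupp.sum]
        refine Finset.sum_eq_zero fun r _ => ?_
        rw [lie_smul, h2 k hk (k + j - 1 + r) (by omega), smul_zero]
      simp only [add_lie, lie_sub, smul_lie, lie_smul, S0, Sk,
        ha j (by omega : 1 ≤ j), h2 k hk j (by omega : 2 ≤ j),
        smul_zero, sub_zero, add_zero] at h
      rw [h]
      congr 2
  refine ⟨key, ?_⟩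
  have hS : ∀ i : ℕ, (lam.sum fun r cr => cr • B (k + (3 + i) - 1 + r)) =
      lam.sum fun r cr => cr • B (k + 2 + i + r) := fun i =>
    sum_index_congr (fun n => B n) lam (by omega)
  rw [hφ1, key 2 le_rfl, lie_sub, lie_smul, h1 2 (by norm_num), lie_finsupp_sum]
  have hL : (lam.sum fun r cr => ⁅B 1, cr • B (k + 2 - 1 + r)⁆) =
      lam.sum fun r cr => cr • (lam.sum fun i ci => ci • B (k + 2 + r + i)) := by
    refine Finsupp.sum_congr fun r _ => ?_
    rw [lie_smul, h1 (k + 2 - 1 + r) (by omega)]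
    congr 1
    refine Finsupp.sum_congr fun i _ => ?_
    congr 2
    omega
  rw [hL]
  have hR : (lam.sum fun i ci => ci • φ (B (3 + i))) =
      (lam.sum fun i ci => ci • B (3 + i)) -
        lam.sum fun i ci => c • (ci • lam.sum fun r cr => cr • B (k + 2 + i + r)) := by
    rw [← Finsupp.sum_sub]
    refine Finsupp.sum_congr fun i _ => ?_
    rw [key (3 + i) (by omega), hS i, smul_sub, smul_comm]
  rw [hR, Finsupp.smul_sum]
end

section
/- Let φ be the linear automorphism of L_{(λ)} determined by φ(a) = c₀ a, φ(e₁) = d₁ e₁ with c₀, d₁ nonzero scalars, extended by φ(e_{i+1}) = [φ(a), φ(eᵢ)]. Then in the new basis the structure sequence (λ₁, λ₂, λ₃, ...) is transformed into (c₀^{-2} d₁ λ₁, c₀^{-3} d₁ λ₂, c₀^{-4} d₁ λ₃, ...), i.e., λ'_s = c₀^{-1-s} d₁ λ_s. -/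
/-- Let `φ` be the linear automorphism of `L_(λ)` (basis `B` with `B 0 = a`,
`B i = eᵢ`) determined by `φ(a) = c₀ a`, `φ(e₁) = d₁ e₁` with `c₀, d₁`
nonzero, extended by `φ(e_{i+1}) = [φ(a), φ(eᵢ)]`.  Then in the new basis the
structure sequence transforms as `λ'_s = c₀^{-1-s} d₁ λ_s`, i.e.
`[φ(e₁), φ(e₂)] = Σ_{s ≥ 1} (c₀^{-1-s} d₁ λ_s) φ(e_{3+s})`. -/
theorem Llam_nu_diag_automorphism (K : Type*) [Field K] [CharZero K]
    (L : Type*) [LieRing L] [LieAlgebra K L] (B : Module.Basis ℕ K L)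
    (lam : ℕ →₀ K) (hlam0 : lam 0 = 0)
    (ha : ∀ i, 1 ≤ i → ⁅B 0, B i⁆ = B (i + 1))
    (h1 : ∀ i, 2 ≤ i → ⁅B 1, B i⁆ = lam.sum fun j cj => cj • B (1 + i + j))
    (h2 : ∀ i, 2 ≤ i → ∀ j, 2 ≤ j → ⁅B i, B j⁆ = 0)
    (c₀ d₁ : K) (hc₀ : c₀ ≠ 0) (hd₁ : d₁ ≠ 0)
    (φ : L →ₗ[K] L)
    (hφa : φ (B 0) = c₀ • B 0)
    (hφ1 : φ (B 1) = d₁ • B 1)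
    (hφrec : ∀ i, 1 ≤ i → φ (B (i + 1)) = ⁅φ (B 0), φ (B i)⁆) :
    ⁅φ (B 1), φ (B 2)⁆ =
      lam.sum fun s cs => ((c₀⁻¹) ^ (1 + s) * d₁ * cs) • φ (B (3 + s)) := by
  have key : ∀ i, 1 ≤ i → φ (B i) = (c₀ ^ (i - 1) * d₁) • B i := by
    intro i hi
    induction i, hi using Nat.le_induction with
    | base => simpa using hφ1
    | succ n hn ih =>
      rw [hφrec n hn, hφa, ih, lie_smul, smul_lie, ha n hn, smul_smul]
      congr 1
      obtain ⟨k, rfl⟩ := Nat.exists_eq_add_of_le hn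
      simp [pow_succ]
      ring
  rw [hφ1, key 2 (by norm_num), lie_smul, smul_lie, h1 2 le_rfl,
    Finsupp.smul_sum, Finsupp.smul_sum]
  apply Finsupp.sum_congr
  intro s _
  rw [key (3 + s) (by omega)]
  have h3 : (1 : ℕ) + 2 + s = 3 + s := by ring
  rw [h3, smul_smul, smul_smul, smul_smul]
  congr 1
  have : (3 + s - 1 : ℕ) = (1 + s) + 1 := by omega
  rw [this, pow_succ, inv_pow]
  field_simp
  ring
end
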